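/- arXiv:1207.4280 — 6 statements merged into one kernel-verified Lean document; each statement's English description precedes it below -/
import Mathlib

section
/- For any positive integers a_1, …, a_m, the Kostka number K(a_1, …, a_m) equals (2/π) · ∫_0^π ( ∏_{i=1}^m sin((a_i + 1)θ)/sin θ ) · sin² θ dθ. -/
/-- The Kostka number `K(a₁,…,aₘ)` of the two-rowed rectangular shape `(s,s)`,
where `2s = a₁ + ⋯ + aₘ`: the number of semistandard Young tableaux with two rows
of length `s` (entries weakly increasing along rows, strictly increasing down
columns) containing exactly `aᵢ` entries equal to `i`.  A tableau is encoded as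
`T : Fin 2 → Fin s → Fin m`, where the value `T r c` encodes the entry `(T r c) + 1`
in row `r`, column `c`.  If the sum of the entries is odd, the Kostka number is `0`. -/
noncomputable def kostka (a : List ℕ) : ℕ :=
  if a.sum % 2 = 0 then
    Nat.card {T : Fin 2 → Fin (a.sum / 2) → Fin a.length //
      (∀ r, Monotone (T r)) ∧
      (∀ c, T 0 c < T 1 c) ∧
      (∀ i : Fin a.length,
        Nat.card {p : Fin 2 × Fin (a.sum / 2) // T p.1 p.2 = i} = a.get i)}
  else 0

open Finset

namespace KIF

variable {n : ℕ}

/-- prefix sum over `Fin n` -/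
def pre {M : Type*} [AddCommMonoid M] (f : Fin n → M) (k : ℕ) : M :=
  ∑ i ∈ univ.filter (fun i : Fin n => (i : ℕ) < k), f i

lemma pre_zero {M : Type*} [AddCommMonoid M] (f : Fin n → M) : pre f 0 = 0 := by
  simp [pre]

lemma pre_succ {M : Type*} [AddCommMonoid M] (f : Fin n → M) {k : ℕ} (h : k < n) :
    pre f (k + 1) = pre f k + f ⟨k, h⟩ := by
  rw [pre, pre]
  rw [show univ.filter (fun i : Fin n => (i : ℕ) < k + 1)
      = insert ⟨k, h⟩ (univ.filter (fun i : Fin n => (i : ℕ) < k)) by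
    ext i; simp [Fin.ext_iff]; omega]
  rw [Finset.sum_insert (by simp)]
  exact add_comm _ _

lemma pre_of_ge {M : Type*} [AddCommMonoid M] (f : Fin n → M) {k : ℕ} (h : n ≤ k) :
    pre f k = ∑ i, f i := by
  rw [pre]
  congr 1
  ext i
  simpa using lt_of_lt_of_le i.2 h

lemma pre_mono_int (f : Fin n → ℤ) (hf : ∀ i, 0 ≤ f i) {k l : ℕ} (h : k ≤ l) :
    pre f k ≤ pre f l := by
  apply Finset.sum_le_sum_of_subset_of_nonneg
  · intro i hi; simp at hi ⊢; omega
  · intro i _ _; exact hf i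

lemma pre_mono_nat (f : Fin n → ℕ) {k l : ℕ} (h : k ≤ l) : pre f k ≤ pre f l := by
  apply Finset.sum_le_sum_of_subset
  intro i hi; simp at hi ⊢; omega

lemma pre_cast (v : Fin n → ℕ) (k : ℕ) :
    ((pre v k : ℕ) : ℤ) = pre (fun i => (v i : ℤ)) k := by
  simp [pre]

lemma pre_update (f : Fin n → ℤ) (b : Fin n) (v : ℤ) (k : ℕ) :
    pre (Function.update f b v) k = pre f k + (if (b : ℕ) < k then v - f b else 0) := by
  by_cases hb : (b : ℕ) < k
  · rw [if_pos hb, pre, pre, Finset.sum_update_of_mem (by simp [hb])]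
    rw [Finset.sdiff_singleton_eq_erase, Finset.sum_erase_eq_sub (by simp [hb])]
    ring
  · rw [if_neg hb, pre, pre, add_zero]
    apply Finset.sum_congr rfl
    intro i hi
    simp at hi
    apply Function.update_of_ne
    intro hib; rw [hib] at hi; exact hb hi


/-- weight -/
def wtZ (A q : Fin n → ℕ) : ℤ := ∑ i, ((A i : ℤ) - 2 * (q i : ℤ))

/-- partial-sum statistic -/
def SS (A q : Fin n → ℕ) (k : ℕ) : ℤ :=
  pre (fun i => (q i : ℤ)) k - pre (fun i => (A i : ℤ) - (q i : ℤ)) (k - 1)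

/-- ballot condition -/
def Ball (A q : Fin n → ℕ) : Prop := ∀ k ≤ n, SS A q k ≤ 0

instance (A q : Fin n → ℕ) : Decidable (Ball A q) := Nat.decidableBallLE n _

lemma SS_zero (A q : Fin n → ℕ) : SS A q 0 = 0 := by simp [SS, pre]

/-- maximum of SS over 0..n -/
def Mx (A q : Fin n → ℕ) : ℤ :=
  (((range (n + 1)).image (SS A q)).max' (by simp))

lemma SS_le_Mx (A q : Fin n → ℕ) {k : ℕ} (hk : k ≤ n) : SS A q k ≤ Mx A q :=
  Finset.le_max' _ _ (mem_image_of_mem _ (mem_range.2 (by omega)))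

lemma exists_SS_eq_Mx (A q : Fin n → ℕ) : ∃ k, k ≤ n ∧ SS A q k = Mx A q := by
  have := Finset.max'_mem ((range (n + 1)).image (SS A q)) (by simp)
  rw [Finset.mem_image] at this
  obtain ⟨k, hk, hSk⟩ := this
  exact ⟨k, by simpa using Nat.lt_succ_iff.mp (mem_range.mp hk), hSk⟩

lemma Mx_le (A q : Fin n → ℕ) {c : ℤ} (h : ∀ k ≤ n, SS A q k ≤ c) : Mx A q ≤ c := by
  apply Finset.max'_le
  intro y hy
  rw [Finset.mem_image] at hy
  obtain ⟨k, hk, rfl⟩ := hy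
  exact h k (by simpa using Nat.lt_succ_iff.mp (mem_range.mp hk))

lemma Mx_nonneg (A q : Fin n → ℕ) : 0 ≤ Mx A q := by
  have := SS_le_Mx A q (k := 0) (by omega)
  rwa [SS_zero] at this

lemma ball_iff (A q : Fin n → ℕ) : Ball A q ↔ Mx A q ≤ 0 :=
  ⟨fun h => Mx_le A q h, fun h k hk => (SS_le_Mx A q hk).trans h⟩

/-- first argmax -/
def ke (A q : Fin n → ℕ) : ℕ := Nat.find (exists_SS_eq_Mx A q)

/-- last argmax -/
def kf (A q : Fin n → ℕ) : ℕ := Nat.findGreatest (fun k => SS A q k = Mx A q) n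

lemma ke_le (A q : Fin n → ℕ) : ke A q ≤ n := (Nat.find_spec (exists_SS_eq_Mx A q)).1
lemma SS_ke (A q : Fin n → ℕ) : SS A q (ke A q) = Mx A q := (Nat.find_spec (exists_SS_eq_Mx A q)).2
lemma ke_min (A q : Fin n → ℕ) {j : ℕ} (h : j < ke A q) : SS A q j ≠ Mx A q := by
  have := Nat.find_min (exists_SS_eq_Mx A q) h
  intro hj
  exact this ⟨by have := ke_le A q; omega, hj⟩

lemma kf_le (A q : Fin n → ℕ) : kf A q ≤ n := Nat.findGreatest_le n

lemma SS_kf (A q : Fin n → ℕ) : SS A q (kf A q) = Mx A q := by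
  obtain ⟨k, hk, hSk⟩ := exists_SS_eq_Mx A q
  exact Nat.findGreatest_spec (P := fun k => SS A q k = Mx A q) hk hSk

lemma kf_max (A q : Fin n → ℕ) {j : ℕ} (h1 : kf A q < j) (h2 : j ≤ n) : SS A q j ≠ Mx A q :=
  Nat.findGreatest_is_greatest h1 h2

lemma ke_eq_of (A q : Fin n → ℕ) {k0 : ℕ} (h0 : k0 ≤ n) (h1 : SS A q k0 = Mx A q)
    (h2 : ∀ j < k0, SS A q j ≠ Mx A q) : ke A q = k0 := by
  rw [ke, Nat.find_eq_iff]
  exact ⟨⟨h0, h1⟩, fun j hj hc => h2 j hj hc.2⟩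

lemma kf_eq_of (A q : Fin n → ℕ) {k0 : ℕ} (h0 : k0 ≤ n) (h1 : SS A q k0 = Mx A q)
    (h2 : ∀ j, k0 < j → j ≤ n → SS A q j ≠ Mx A q) : kf A q = k0 := by
  rw [kf, Nat.findGreatest_eq_iff]
  exact ⟨h0, fun _ => h1, fun j hj hjn => h2 j hj hjn⟩


section Update

variable {A q : Fin n → ℕ}

lemma cast_update (q : Fin n → ℕ) (b : Fin n) (v : ℕ) :
    (fun i => ((Function.update q b v) i : ℤ)) = Function.update (fun i => (q i : ℤ)) b (v : ℤ) := by
  funext i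
  rcases eq_or_ne i b with h | h
  · subst h; simp
  · simp [Function.update_of_ne h]

lemma castA_update (A q : Fin n → ℕ) (b : Fin n) (v : ℕ) :
    (fun i => ((A i : ℤ) - ((Function.update q b v) i : ℤ)))
      = Function.update (fun i => (A i : ℤ) - (q i : ℤ)) b ((A b : ℤ) - (v : ℤ)) := by
  funext i
  rcases eq_or_ne i b with h | h
  · subst h; simp
  · simp [Function.update_of_ne h]

lemma wtZ_eq (A q : Fin n → ℕ) :
    wtZ A q = (∑ i, (A i : ℤ)) - 2 * ∑ i, (q i : ℤ) := by
  rw [wtZ, Finset.sum_sub_distrib, ← Finset.mul_sum]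

lemma sum_eq_pre (f : Fin n → ℤ) : ∑ i, f i = pre f n := (pre_of_ge f le_rfl).symm

lemma sum_update_int (f : Fin n → ℤ) (b : Fin n) (v : ℤ) :
    ∑ i, Function.update f b v i = (∑ i, f i) + (v - f b) := by
  rw [Finset.sum_update_of_mem (mem_univ b), Finset.sdiff_singleton_eq_erase,
    Finset.sum_erase_eq_sub (mem_univ b)]
  ring

lemma wt_update (A q : Fin n → ℕ) (b : Fin n) (v : ℕ) :
    wtZ A (Function.update q b v) = wtZ A q - 2 * ((v : ℤ) - (q b : ℤ)) := by
  rw [wtZ_eq, wtZ_eq, cast_update, sum_update_int]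
  ring

lemma SS_update (A q : Fin n → ℕ) (b : Fin n) (v : ℕ) (k : ℕ) :
    SS A (Function.update q b v) k = SS A q k +
      ((v : ℤ) - (q b : ℤ)) *
        ((if (b : ℕ) < k then 1 else 0) + (if (b : ℕ) + 1 < k then 1 else 0)) := by
  rw [SS, SS, cast_update, castA_update, pre_update, pre_update]
  by_cases hb : (b : ℕ) < k <;> by_cases hb2 : (b : ℕ) + 1 < k
  · simp only [if_pos hb, if_pos hb2, if_pos (show (b : ℕ) < k - 1 by omega)]; ring
  · simp only [if_pos hb, if_neg hb2, if_neg (show ¬ (b : ℕ) < k - 1 by omega)]; ring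
  · omega
  · simp only [if_neg hb, if_neg hb2, if_neg (show ¬ (b : ℕ) < k - 1 by omega)]; ring

lemma SS_at_n (A q : Fin n → ℕ) (b : Fin n) (hb : (b : ℕ) + 1 = n) :
    SS A q n = -(wtZ A q) + ((A b : ℤ) - (q b : ℤ)) := by
  have hbn : (b : ℕ) < n := by omega
  have h1 : pre (fun i => (q i : ℤ)) n = ∑ i, (q i : ℤ) := pre_of_ge _ le_rfl
  have h2 : pre (fun i => (A i : ℤ) - (q i : ℤ)) ((b : ℕ) + 1)
      = pre (fun i => (A i : ℤ) - (q i : ℤ)) (b : ℕ) + ((A b : ℤ) - (q b : ℤ)) := by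
    rw [pre_succ _ hbn]
  have h3 : pre (fun i => (A i : ℤ) - (q i : ℤ)) ((b : ℕ) + 1) = ∑ i, ((A i : ℤ) - (q i : ℤ)) :=
    pre_of_ge _ (by omega)
  have h4 : n - 1 = (b : ℕ) := by omega
  rw [SS, h4, h1]
  have h5 : ∑ i, ((A i : ℤ) - (q i : ℤ)) = (∑ i, (A i : ℤ)) - ∑ i, (q i : ℤ) :=
    Finset.sum_sub_distrib _ _
  rw [wtZ_eq]
  omega

lemma ke_pos (hM : 1 ≤ Mx A q) : 1 ≤ ke A q := by
  by_contra h
  have h0 : ke A q = 0 := by omega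
  have := SS_ke A q
  rw [h0, SS_zero] at this
  omega

lemma kf_pos (hM : 1 ≤ Mx A q) : 1 ≤ kf A q := by
  by_contra h
  have h0 : kf A q = 0 := by omega
  have := SS_kf A q
  rw [h0, SS_zero] at this
  omega

lemma q_pos_at_ke (hq : ∀ i, q i ≤ A i) (hM : 1 ≤ Mx A q) (b : Fin n)
    (hb : (b : ℕ) + 1 = ke A q) : 1 ≤ q b := by
  by_contra h
  have hqb : q b = 0 := by omega
  have hSk := SS_ke A q
  have hbn : (b : ℕ) < n := b.2
  have e1 : pre (fun i => (q i : ℤ)) (ke A q) = pre (fun i => (q i : ℤ)) (b : ℕ) := by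
    rw [← hb, pre_succ _ hbn]
    simp [hqb]
  have e2 : pre (fun i => (A i : ℤ) - (q i : ℤ)) ((b : ℕ) - 1)
      ≤ pre (fun i => (A i : ℤ) - (q i : ℤ)) (ke A q - 1) :=
    pre_mono_int _ (fun i => by have := hq i; omega) (by omega)
  have key : Mx A q ≤ SS A q (b : ℕ) := by
    rw [← hSk, SS, SS, e1]
    omega
  have h5 := SS_le_Mx A q (k := (b : ℕ)) (by omega)
  have h6 := ke_min A q (j := (b : ℕ)) (by omega)
  omega

lemma p_pos_at_kf (hq : ∀ i, q i ≤ A i) (hphi : 1 ≤ wtZ A q + Mx A q)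
    (b : Fin n) (hb : (b : ℕ) + 1 = kf A q) : q b < A b := by
  by_contra h
  have hqb : q b = A b := le_antisymm (hq b) (by omega)
  have hSk := SS_kf A q
  have hkfn := kf_le A q
  rcases eq_or_lt_of_le hkfn with heq | hlt
  · have hSn := SS_at_n A q b (by omega)
    rw [heq, hSn, hqb] at hSk
    omega
  · have hkb : (kf A q : ℕ) < n := hlt
    have e1 : pre (fun i => (q i : ℤ)) (kf A q + 1)
        = pre (fun i => (q i : ℤ)) (kf A q) + (q ⟨kf A q, hkb⟩ : ℤ) := pre_succ _ hkb
    have hbn : (b : ℕ) < n := b.2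
    have e2 : pre (fun i => (A i : ℤ) - (q i : ℤ)) ((kf A q + 1) - 1)
        = pre (fun i => (A i : ℤ) - (q i : ℤ)) (kf A q - 1) := by
      have h1 : (kf A q + 1) - 1 = (b : ℕ) + 1 := by omega
      have h2 : kf A q - 1 = (b : ℕ) := by omega
      rw [h1, h2, pre_succ _ hbn]
      simp [hqb]
    have key : Mx A q ≤ SS A q (kf A q + 1) := by
      rw [← hSk, SS, SS, e1, e2]
      have : (0 : ℤ) ≤ (q ⟨kf A q, hkb⟩ : ℤ) := by positivity
      omega
    have h5 := SS_le_Mx A q (k := kf A q + 1) (by omega)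
    have h6 := kf_max A q (j := kf A q + 1) (by omega) (by omega)
    omega

lemma after_inc (b : Fin n) (hb : (b : ℕ) + 1 = kf A q) :
    Mx A (Function.update q b (q b + 1)) = Mx A q + 1 ∧
      ke A (Function.update q b (q b + 1)) = kf A q := by
  set q' := Function.update q b (q b + 1) with hq'
  have hSS : ∀ k, SS A q' k = SS A q k +
      ((if (b : ℕ) < k then 1 else 0) + (if (b : ℕ) + 1 < k then 1 else 0)) := by
    intro k
    rw [hq', SS_update]
    push_cast
    ring
  have hK : kf A q ≤ n := kf_le A q
  have hlt : ∀ k, k < kf A q → SS A q' k = SS A q k := by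
    intro k hk
    rw [hSS, if_neg (by omega), if_neg (by omega)]
    ring
  have hat : SS A q' (kf A q) = Mx A q + 1 := by
    rw [hSS, if_pos (by omega), if_neg (by omega), SS_kf]
    ring
  have hub : ∀ k, k ≤ n → SS A q' k ≤ Mx A q + 1 := by
    intro k hkn
    rcases lt_trichotomy k (kf A q) with h | h | h
    · rw [hlt k h]
      have := SS_le_Mx A q hkn
      omega
    · rw [h, hat]
    · have h1 := SS_le_Mx A q hkn
      have h2 := kf_max A q h hkn
      rw [hSS, if_pos (by omega)]
      by_cases h3 : (b : ℕ) + 1 < k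
      · rw [if_pos h3]; omega
      · rw [if_neg h3]; omega
  have hMx : Mx A q' = Mx A q + 1 := by
    apply le_antisymm (Mx_le A q' hub)
    rw [← hat]
    exact SS_le_Mx A q' hK
  refine ⟨hMx, ke_eq_of A q' hK (by rw [hat, hMx]) ?_⟩
  intro j hj
  rw [hlt j hj, hMx]
  have := SS_le_Mx A q (le_trans (le_of_lt hj) hK)
  omega

lemma after_dec (b : Fin n) (hb : (b : ℕ) + 1 = ke A q) (hqb : 1 ≤ q b) :
    Mx A (Function.update q b (q b - 1)) = Mx A q - 1 ∧
      ke A q ≤ n ∧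
      kf A (Function.update q b (q b - 1)) = ke A q := by
  set q' := Function.update q b (q b - 1) with hq'
  have hcast : ((q b - 1 : ℕ) : ℤ) - (q b : ℤ) = -1 := by omega
  have hSS : ∀ k, SS A q' k = SS A q k -
      ((if (b : ℕ) < k then 1 else 0) + (if (b : ℕ) + 1 < k then 1 else 0)) := by
    intro k
    rw [hq', SS_update, hcast]
    ring
  have hK : ke A q ≤ n := ke_le A q
  have hlt : ∀ k, k < ke A q → SS A q' k = SS A q k := by
    intro k hk
    rw [hSS, if_neg (by omega), if_neg (by omega)]
    ring
  have hat : SS A q' (ke A q) = Mx A q - 1 := by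
    rw [hSS, if_pos (by omega), if_neg (by omega), SS_ke]
    ring
  have hub : ∀ k, k ≤ n → SS A q' k ≤ Mx A q - 1 := by
    intro k hkn
    rcases lt_trichotomy k (ke A q) with h | h | h
    · rw [hlt k h]
      have h1 := SS_le_Mx A q hkn
      have h2 := ke_min A q h
      omega
    · rw [h, hat]
    · have h1 := SS_le_Mx A q hkn
      rw [hSS, if_pos (by omega), if_pos (by omega)]
      omega
  have hMx : Mx A q' = Mx A q - 1 := by
    apply le_antisymm (Mx_le A q' hub)
    rw [← hat]
    exact SS_le_Mx A q' hK
  refine ⟨hMx, hK, kf_eq_of A q' hK (by rw [hat, hMx]) ?_⟩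
  intro j hj hjn
  rw [hSS, if_pos (by omega), if_pos (by omega), hMx]
  have := SS_le_Mx A q hjn
  omega

end Update


section Beta

variable {A : Fin n → ℕ}

/-- the lowering map: increment q at the block just before the last argmax -/
def bumpF (A q : Fin n → ℕ) : Fin n → ℕ :=
  if h : 1 ≤ kf A q ∧ kf A q ≤ n then
    Function.update q ⟨kf A q - 1, by omega⟩ (q ⟨kf A q - 1, by omega⟩ + 1)
  else q

/-- the raising map: decrement q at the block just before the first argmax -/
def bumpG (A q : Fin n → ℕ) : Fin n → ℕ :=
  if h : 1 ≤ ke A q ∧ ke A q ≤ n then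
    Function.update q ⟨ke A q - 1, by omega⟩ (q ⟨ke A q - 1, by omega⟩ - 1)
  else q

lemma bumpF_eq {q : Fin n → ℕ} (h1 : 1 ≤ kf A q) (b : Fin n) (hb : (b : ℕ) + 1 = kf A q) :
    bumpF A q = Function.update q b (q b + 1) := by
  have h2 : kf A q ≤ n := kf_le A q
  rw [bumpF, dif_pos ⟨h1, h2⟩]
  have hbb : (⟨kf A q - 1, by omega⟩ : Fin n) = b := Fin.ext (by simp; omega)
  rw [hbb]

lemma bumpG_eq {q : Fin n → ℕ} (h1 : 1 ≤ ke A q) (b : Fin n) (hb : (b : ℕ) + 1 = ke A q) :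
    bumpG A q = Function.update q b (q b - 1) := by
  have h2 : ke A q ≤ n := ke_le A q
  rw [bumpG, dif_pos ⟨h1, h2⟩]
  have hbb : (⟨ke A q - 1, by omega⟩ : Fin n) = b := Fin.ext (by simp; omega)
  rw [hbb]

/-- the ambient finset -/
def J (A : Fin n → ℕ) : Finset (Fin n → ℕ) := Fintype.piFinset (fun i => range (A i + 1))

lemma memJ {q : Fin n → ℕ} : q ∈ J A ↔ ∀ i, q i ≤ A i := by
  simp [J, Fintype.mem_piFinset, Nat.lt_succ_iff]

lemma wtZ_zero_of_nil (hn : n = 0) (q : Fin n → ℕ) : wtZ A q = 0 := by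
  subst hn
  simp [wtZ]

lemma Mx_big_of_wt {q : Fin n → ℕ} (hJ : ∀ i, q i ≤ A i) (hw : wtZ A q = -2) :
    2 ≤ Mx A q := by
  have hn : 1 ≤ n := by
    rcases Nat.eq_zero_or_pos n with h | h
    · exfalso; rw [wtZ_zero_of_nil h q] at hw; omega
    · omega
  set c : Fin n := ⟨n - 1, by omega⟩ with hcdef
  have hSn : SS A q n = -(wtZ A q) + ((A c : ℤ) - (q c : ℤ)) :=
    SS_at_n A q c (by simp [hcdef]; omega)
  have h1 := SS_le_Mx A q (k := n) le_rfl
  have h3 : (q c : ℤ) ≤ (A c : ℤ) := by exact_mod_cast Nat.cast_le.mpr (hJ c)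
  rw [hSn, hw] at h1
  omega

theorem beta_card :
    ((J A).filter (fun q => wtZ A q = 0 ∧ ¬ Ball A q)).card
      = ((J A).filter (fun q => wtZ A q = -2)).card := by
  apply Finset.card_bij' (i := fun q _ => bumpF A q) (j := fun q _ => bumpG A q)
  · -- maps into t
    intro q hq
    rw [mem_filter] at hq ⊢
    obtain ⟨hJ, hw, hnb⟩ := hq
    rw [memJ] at hJ
    have hM : 1 ≤ Mx A q := by
      rw [ball_iff] at hnb
      have := Mx_nonneg A q
      omega
    have hkf1 := kf_pos (A := A) (q := q) hM
    set b : Fin n := ⟨kf A q - 1, by have := kf_le A q; omega⟩ with hbdef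
    have hb : (b : ℕ) + 1 = kf A q := by simp [hbdef]; omega
    have hbF : bumpF A q = Function.update q b (q b + 1) := bumpF_eq hkf1 b hb
    have hpp := p_pos_at_kf hJ (by rw [hw]; omega) b hb
    constructor
    · rw [memJ]
      intro i
      rcases eq_or_ne i b with h | h
      · subst h; rw [hbF, Function.update_self]; omega
      · rw [hbF, Function.update_of_ne h]; exact hJ i
    · rw [hbF, wt_update, hw]
      push_cast
      ring
  · -- maps into s
    intro q hq
    rw [mem_filter] at hq ⊢
    obtain ⟨hJ, hw⟩ := hq
    rw [memJ] at hJ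
    have hM2 : 2 ≤ Mx A q := Mx_big_of_wt hJ hw
    have hM : 1 ≤ Mx A q := by omega
    have hke1 := ke_pos (A := A) (q := q) hM
    set b : Fin n := ⟨ke A q - 1, by have := ke_le A q; omega⟩ with hbdef
    have hb : (b : ℕ) + 1 = ke A q := by simp [hbdef]; omega
    have hbG : bumpG A q = Function.update q b (q b - 1) := bumpG_eq hke1 b hb
    have hqp := q_pos_at_ke hJ hM b hb
    have had := after_dec b hb hqp
    refine ⟨?_, ?_, ?_⟩
    · rw [memJ]
      intro i
      rcases eq_or_ne i b with h | h
      · subst h; rw [hbG, Function.update_self]; have := hJ b; omega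
      · rw [hbG, Function.update_of_ne h]; exact hJ i
    · rw [hbG, wt_update, hw]
      have : ((q b - 1 : ℕ) : ℤ) = (q b : ℤ) - 1 := by omega
      rw [this]
      ring
    · rw [hbG, ball_iff]
      omega
  · -- left inverse
    intro q hq
    rw [mem_filter] at hq
    obtain ⟨hJ, hw, hnb⟩ := hq
    rw [memJ] at hJ
    have hM : 1 ≤ Mx A q := by
      rw [ball_iff] at hnb
      have := Mx_nonneg A q
      omega
    have hkf1 := kf_pos (A := A) (q := q) hM
    set b : Fin n := ⟨kf A q - 1, by have := kf_le A q; omega⟩ with hbdef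
    have hb : (b : ℕ) + 1 = kf A q := by simp [hbdef]; omega
    have hbF : bumpF A q = Function.update q b (q b + 1) := bumpF_eq hkf1 b hb
    set q' := Function.update q b (q b + 1) with hq'
    have hai := after_inc b hb
    rw [← hq'] at hai
    have hke' : ke A q' = (b : ℕ) + 1 := by rw [hai.2, hb]
    have hbG : bumpG A q' = Function.update q' b (q' b - 1) :=
      bumpG_eq (by omega) b (by omega)
    rw [hbF, hbG]
    have hv : q' b = q b + 1 := by rw [hq', Function.update_self]
    rw [hv, Nat.add_sub_cancel, hq', Function.update_idem, Function.update_eq_self]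
  · -- right inverse
    intro q hq
    rw [mem_filter] at hq
    obtain ⟨hJ, hw⟩ := hq
    rw [memJ] at hJ
    have hM2 : 2 ≤ Mx A q := Mx_big_of_wt hJ hw
    have hM : 1 ≤ Mx A q := by omega
    have hke1 := ke_pos (A := A) (q := q) hM
    set b : Fin n := ⟨ke A q - 1, by have := ke_le A q; omega⟩ with hbdef
    have hb : (b : ℕ) + 1 = ke A q := by simp [hbdef]; omega
    have hbG : bumpG A q = Function.update q b (q b - 1) := bumpG_eq hke1 b hb
    have hqp := q_pos_at_ke hJ hM b hb
    set q' := Function.update q b (q b - 1) with hq'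
    have had := after_dec b hb hqp
    rw [← hq'] at had
    have hkf' : kf A q' = (b : ℕ) + 1 := by rw [had.2.2, hb]
    have hbF : bumpF A q' = Function.update q' b (q' b + 1) :=
      bumpF_eq (by omega) b (by omega)
    rw [hbG, hbF]
    have hv : q' b = q b - 1 := by rw [hq', Function.update_self]
    rw [hv, show q b - 1 + 1 = q b from by omega, hq', Function.update_idem,
      Function.update_eq_self]

end Beta


section Gamma

variable {s : ℕ}

/-- count vector (content) of a map `Fin s → Fin n` -/
def cnt (f : Fin s → Fin n) : Fin n → ℕ := fun i => (univ.filter (fun c => f c = i)).card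

lemma sum_cnt (f : Fin s → Fin n) : ∑ i, cnt f i = s := by
  have h := Finset.card_eq_sum_card_fiberwise
    (s := (univ : Finset (Fin s))) (t := (univ : Finset (Fin n))) (f := f)
    (fun c _ => mem_univ (f c))
  simpa [cnt] using h.symm

lemma card_lt_eq_pre (f : Fin s → Fin n) (k : ℕ) :
    (univ.filter (fun c => ((f c : ℕ) < k))).card = pre (cnt f) k := by
  rw [pre, Finset.card_eq_sum_card_fiberwise
    (f := f) (t := univ.filter (fun i : Fin n => (i : ℕ) < k))
    (fun c hc => by simp at hc ⊢; exact hc)]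
  apply Finset.sum_congr rfl
  intro i hi
  simp only [mem_filter, mem_univ, true_and] at hi
  rw [cnt]
  congr 1
  ext c
  simp only [mem_filter, mem_univ, true_and, and_iff_right_iff_imp]
  intro hc
  rw [hc]
  exact hi

lemma mono_lt_iff {f : Fin s → Fin n} (hf : Monotone f) (c : Fin s) (k : ℕ) :
    ((f c : ℕ) < k) ↔ ((c : ℕ) < pre (cnt f) k) := by
  rw [← card_lt_eq_pre]
  constructor
  · intro h
    have hsub : Finset.Iic c ⊆ univ.filter (fun c => ((f c : ℕ) < k)) := by
      intro c' hc'
      rw [Finset.mem_Iic] at hc'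
      have : f c' ≤ f c := hf hc'
      simp only [mem_filter, mem_univ, true_and]
      have := Fin.le_iff_val_le_val.mp this
      omega
    have hcard := Finset.card_le_card hsub
    rw [Fin.card_Iic] at hcard
    omega
  · intro h
    by_contra hlt
    have hsub : univ.filter (fun c => ((f c : ℕ) < k)) ⊆ Finset.Iio c := by
      intro c' hc'
      simp only [mem_filter, mem_univ, true_and] at hc'
      rw [Finset.mem_Iio]
      by_contra hcc
      have : f c ≤ f c' := hf (le_of_not_gt hcc)
      have := Fin.le_iff_val_le_val.mp this
      omega
    have hcard := Finset.card_le_card hsub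
    rw [Fin.card_Iio] at hcard
    omega

lemma mono_ext {f g : Fin s → Fin n} (hf : Monotone f) (hg : Monotone g)
    (h : cnt f = cnt g) : f = g := by
  funext c
  apply Fin.ext
  have h1 := mono_lt_iff hf c ((g c : ℕ) + 1)
  have h2 := mono_lt_iff hg c ((g c : ℕ) + 1)
  have h3 := mono_lt_iff hf c ((f c : ℕ) + 1)
  have h4 := mono_lt_iff hg c ((f c : ℕ) + 1)
  rw [h] at h1 h3
  omega

/-- construct the monotone map with prescribed content -/
lemma buildF_ex (v : Fin n → ℕ) (hs : pre v n = s) (c : Fin s) :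
    ∃ k, (c : ℕ) < pre v (k + 1) := by
  refine ⟨n, ?_⟩
  rw [pre_of_ge v (by omega : n ≤ n + 1)]
  rw [pre_of_ge v (le_refl n)] at hs
  rw [hs]
  exact c.2

lemma buildF_bound (v : Fin n → ℕ) (hs : pre v n = s) (c : Fin s) :
    Nat.find (buildF_ex v hs c) < n := by
  set H := buildF_ex v hs c with hH
  have hle : Nat.find H ≤ n := Nat.find_le (by
    rw [pre_of_ge v (by omega : n ≤ n + 1)]
    rw [pre_of_ge v (le_refl n)] at hs
    rw [hs]
    exact c.2)
  rcases Nat.eq_zero_or_pos n with hn | hn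
  · exfalso
    have hs0 : s = 0 := by
      subst hn
      rw [← hs]
      exact pre_zero v
    have := c.2
    omega
  · rcases Nat.lt_or_ge (Nat.find H) n with h | h
    · exact h
    · exfalso
      have hmin := Nat.find_min H (m := n - 1) (by omega)
      rw [show n - 1 + 1 = n from by omega, hs] at hmin
      exact hmin c.2

def buildF (v : Fin n → ℕ) (hs : pre v n = s) : Fin s → Fin n :=
  fun c => ⟨Nat.find (buildF_ex v hs c), buildF_bound v hs c⟩

lemma buildF_lt_iff (v : Fin n → ℕ) (hs : pre v n = s) (c : Fin s) (k : ℕ) :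
    ((buildF v hs c : ℕ) < k) ↔ ((c : ℕ) < pre v k) := by
  show Nat.find (buildF_ex v hs c) < k ↔ _
  rw [Nat.find_lt_iff]
  constructor
  · rintro ⟨j, hj, hc⟩
    have := pre_mono_nat v (show j + 1 ≤ k by omega)
    omega
  · intro h
    rcases Nat.eq_zero_or_pos k with hk | hk
    · exfalso; rw [hk, pre_zero] at h; omega
    · exact ⟨k - 1, by omega, by rw [show k - 1 + 1 = k from by omega]; exact h⟩

lemma buildF_mono (v : Fin n → ℕ) (hs : pre v n = s) : Monotone (buildF v hs) := by
  intro c c' hcc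
  rw [Fin.le_iff_val_le_val]
  by_contra h
  have h1 := buildF_lt_iff v hs c ((buildF v hs c' : ℕ) + 1)
  have h2 := buildF_lt_iff v hs c' ((buildF v hs c' : ℕ) + 1)
  have h3 := Fin.le_iff_val_le_val.mp hcc
  omega

lemma buildF_spec (v : Fin n → ℕ) (hs : pre v n = s) (c : Fin s) :
    pre v ((buildF v hs c : ℕ)) ≤ (c : ℕ) ∧ (c : ℕ) < pre v ((buildF v hs c : ℕ) + 1) := by
  have h1 := buildF_lt_iff v hs c ((buildF v hs c : ℕ) + 1)
  have h2 := buildF_lt_iff v hs c ((buildF v hs c : ℕ))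
  omega

lemma count_interval (a b : ℕ) (hb : b ≤ s) :
    (univ.filter (fun c : Fin s => a ≤ (c : ℕ) ∧ (c : ℕ) < b)).card = b - a := by
  rw [← Nat.card_Ico a b]
  refine Finset.card_nbij (i := fun c => (c : ℕ)) ?_ ?_ ?_
  · intro c hc
    simp at hc ⊢
    omega
  · intro c _ c' _ h
    exact Fin.ext h
  · intro x hx
    simp only [Finset.coe_Ico, Set.mem_Ico] at hx
    refine ⟨⟨x, by omega⟩, ?_, rfl⟩
    simp
    omega

lemma cnt_buildF (v : Fin n → ℕ) (hs : pre v n = s) : cnt (buildF v hs) = v := by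
  funext i
  have key : ∀ c : Fin s, (buildF v hs c = i) ↔
      (pre v (i : ℕ) ≤ (c : ℕ) ∧ (c : ℕ) < pre v ((i : ℕ) + 1)) := by
    intro c
    constructor
    · intro h
      have := buildF_spec v hs c
      rw [h] at this
      exact this
    · intro h
      have h1 := buildF_lt_iff v hs c ((i : ℕ) + 1)
      have h2 := buildF_lt_iff v hs c (i : ℕ)
      apply Fin.ext
      omega
  rw [cnt]
  rw [show (univ.filter (fun c => buildF v hs c = i))
      = (univ.filter (fun c : Fin s => pre v (i : ℕ) ≤ (c : ℕ) ∧ (c : ℕ) < pre v ((i : ℕ) + 1)))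
      from by ext c; simp [key c]]
  rw [count_interval _ _ (by rw [← hs]; exact pre_mono_nat v i.2)]
  have := pre_succ v i.2
  have heta : (⟨(i : ℕ), i.2⟩ : Fin n) = i := Fin.ext rfl
  rw [heta] at this
  omega

lemma content_split (T : Fin 2 → Fin s → Fin n) (i : Fin n) :
    Nat.card {p : Fin 2 × Fin s // T p.1 p.2 = i} = cnt (T 0) i + cnt (T 1) i := by
  rw [Nat.card_eq_fintype_card, Fintype.card_subtype]
  rw [Finset.card_eq_sum_card_fiberwise (f := Prod.fst) (t := univ) (fun x _ => mem_univ _)]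
  have hr : ∀ r : Fin 2, ((univ.filter (fun p : Fin 2 × Fin s => T p.1 p.2 = i)).filter
      (fun p => p.1 = r)).card = cnt (T r) i := by
    intro r
    rw [cnt]
    apply Finset.card_nbij (i := fun p => p.2)
    · intro p hp
      simp only [Finset.coe_filter, Set.mem_setOf_eq, mem_filter, mem_univ, true_and] at hp ⊢
      rw [← hp.2]
      exact hp.1
    · intro p hp p' hp' h
      simp only [Finset.coe_filter, Set.mem_setOf_eq] at hp hp'
      ext
      · rw [hp.2, hp'.2]
      · exact congrArg Fin.val h
    · intro c hc
      simp only [Finset.coe_filter, Set.mem_setOf_eq, mem_univ, true_and] at hc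
      refine ⟨(r, c), ?_, rfl⟩
      simp [hc]
  rw [Fin.sum_univ_two, hr 0, hr 1]

end Gamma


section GammaMain

variable {s : ℕ} {A : Fin n → ℕ}

lemma pq_split {T : Fin 2 → Fin s → Fin n}
    (hcnt : ∀ i, Nat.card {p : Fin 2 × Fin s // T p.1 p.2 = i} = A i) (i : Fin n) :
    cnt (T 0) i + cnt (T 1) i = A i :=
  (content_split T i).symm.trans (hcnt i)

lemma phi_wt {T : Fin 2 → Fin s → Fin n}
    (hcnt : ∀ i, Nat.card {p : Fin 2 × Fin s // T p.1 p.2 = i} = A i) :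
    wtZ A (cnt (T 1)) = 0 := by
  have hq1 : ∑ i, (cnt (T 1) i : ℤ) = (s : ℤ) := by
    rw [← Nat.cast_sum, sum_cnt]
  have hq0 : ∑ i, (cnt (T 0) i : ℤ) = (s : ℤ) := by
    rw [← Nat.cast_sum, sum_cnt]
  have hA : ∑ i, (A i : ℤ) = 2 * s := by
    have h1 : ∑ i, (A i : ℤ) = ∑ i, ((cnt (T 0) i : ℤ) + (cnt (T 1) i : ℤ)) :=
      Finset.sum_congr rfl (fun i _ => by
        have := pq_split hcnt i
        omega)
    rw [h1, Finset.sum_add_distrib, hq0, hq1]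
    ring
  rw [wtZ_eq, hA, hq1]
  ring

lemma phi_ball {T : Fin 2 → Fin s → Fin n} (hcol : ∀ c, T 0 c < T 1 c)
    (hcnt : ∀ i, Nat.card {p : Fin 2 × Fin s // T p.1 p.2 = i} = A i) :
    Ball A (cnt (T 1)) := by
  intro k hk
  have hfun : (fun i => (A i : ℤ) - (cnt (T 1) i : ℤ)) = fun i => (cnt (T 0) i : ℤ) :=
    funext (fun i => by have := pq_split hcnt i; omega)
  rw [SS, hfun, ← pre_cast, ← pre_cast]
  have hle : pre (cnt (T 1)) k ≤ pre (cnt (T 0)) (k - 1) := by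
    rw [← card_lt_eq_pre, ← card_lt_eq_pre]
    apply Finset.card_le_card
    intro c hc
    simp only [mem_filter, mem_univ, true_and] at hc ⊢
    have := Fin.lt_iff_val_lt_val.mp (hcol c)
    rcases Nat.eq_zero_or_pos k with h0 | h0
    · omega
    · omega
  omega

theorem gamma_card (a : List ℕ) (h2 : a.sum % 2 = 0) :
    kostka a = ((J (fun i : Fin a.length => a.get i)).filter
      (fun q => wtZ (fun i => a.get i) q = 0 ∧ Ball (fun i => a.get i) q)).card := by
  rw [kostka, if_pos h2, ← Nat.card_eq_finsetCard]
  have hsumA : ∑ i, a.get i = a.sum := by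
    have h := List.sum_ofFn (f := fun i : Fin a.length => a.get i)
    rw [List.ofFn_get] at h
    exact h.symm
  have h2s : 2 * (a.sum / 2) = ∑ i, a.get i := by omega
  apply Nat.card_congr
  refine Equiv.ofBijective (fun Tp => ⟨cnt (Tp.1 1), ?_⟩) ⟨?_, ?_⟩
  · -- membership
    rw [mem_filter]
    refine ⟨memJ.mpr (fun i => ?_), phi_wt Tp.2.2.2, phi_ball Tp.2.2.1 Tp.2.2.2⟩
    have := pq_split Tp.2.2.2 i
    omega
  · -- injectivity
    rintro ⟨T, hmono, hcol, hcnt⟩ ⟨T', hmono', hcol', hcnt'⟩ h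
    rw [Subtype.mk.injEq] at h ⊢
    have h1 : cnt (T 1) = cnt (T' 1) := h
    have h0 : cnt (T 0) = cnt (T' 0) := by
      funext i
      have e1 := pq_split hcnt i
      have e2 := pq_split hcnt' i
      have := congrFun h1 i
      omega
    have hr : ∀ r, T r = T' r := by
      intro r
      fin_cases r
      · exact mono_ext (hmono 0) (hmono' 0) h0
      · exact mono_ext (hmono 1) (hmono' 1) h1
    exact funext hr
  · -- surjectivity
    rintro ⟨q, hqmem⟩
    rw [mem_filter] at hqmem
    obtain ⟨hJm, hw, hball⟩ := hqmem
    rw [memJ] at hJm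
    have hZq : ∑ i, (q i : ℤ) = ((a.sum / 2 : ℕ) : ℤ) := by
      rw [wtZ_eq] at hw
      have hA2 : ∑ i, (a.get i : ℤ) = 2 * ((a.sum / 2 : ℕ) : ℤ) := by
        rw [← Nat.cast_sum]
        exact_mod_cast congrArg (Nat.cast : ℕ → ℤ) h2s.symm
      omega
    have hsq : pre q a.length = a.sum / 2 := by
      rw [pre_of_ge q le_rfl]
      exact_mod_cast hZq
    set p : Fin a.length → ℕ := fun i => a.get i - q i with hp
    have hpcast : ∀ i, (p i : ℤ) = (a.get i : ℤ) - (q i : ℤ) := by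
      intro i
      have := hJm i
      simp only [hp]
      omega
    have hsp : pre p a.length = a.sum / 2 := by
      rw [pre_of_ge p le_rfl]
      have hZp : ∑ i, (p i : ℤ) = ((a.sum / 2 : ℕ) : ℤ) := by
        rw [Finset.sum_congr rfl (fun i _ => hpcast i), Finset.sum_sub_distrib, hZq]
        have hA2 : ∑ i, (a.get i : ℤ) = 2 * ((a.sum / 2 : ℕ) : ℤ) := by
          rw [← Nat.cast_sum]
          exact_mod_cast congrArg (Nat.cast : ℕ → ℤ) h2s.symm
        omega
      exact_mod_cast hZp
    refine ⟨⟨![buildF p hsp, buildF q hsq], ?_, ?_, ?_⟩, ?_⟩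
    · intro r
      fin_cases r
      · simpa using buildF_mono p hsp
      · simpa using buildF_mono q hsq
    · intro c
      show (![buildF p hsp, buildF q hsq] 0) c < (![buildF p hsp, buildF q hsq] 1) c
      simp only [Matrix.cons_val_zero, Matrix.cons_val_one, Matrix.head_cons]
      set k := (buildF q hsq c : ℕ) with hkdef
      have hk1 : (c : ℕ) < pre q (k + 1) := (buildF_spec q hsq c).2
      have hkn : k + 1 ≤ a.length := (buildF q hsq c).2
      have hSb := hball (k + 1) hkn
      rw [SS, show (fun i => ((a.get i : ℕ) : ℤ) - (q i : ℤ)) = fun i => (p i : ℤ) from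
        funext (fun i => (hpcast i).symm), ← pre_cast, ← pre_cast] at hSb
      have hck : (c : ℕ) < pre p ((k + 1) - 1) := by omega
      rw [show (k + 1) - 1 = k from rfl] at hck
      have := (buildF_lt_iff p hsp c k).mpr hck
      rw [Fin.lt_iff_val_lt_val]
      omega
    · intro i
      rw [content_split]
      show cnt (![buildF p hsp, buildF q hsq] 0) i + cnt (![buildF p hsp, buildF q hsq] 1) i = _
      simp only [Matrix.cons_val_zero, Matrix.cons_val_one, Matrix.head_cons]
      rw [cnt_buildF, cnt_buildF]
      have := hJm i
      simp only [hp]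
      omega
    · apply Subtype.ext
      show cnt (![buildF p hsp, buildF q hsq] 1) = q
      simp only [Matrix.cons_val_one, Matrix.head_cons]
      exact cnt_buildF q hsq

end GammaMain


section Alpha

open intervalIntegral in
lemma integral_cos_zmul (c : ℤ) :
    ∫ θ in (0:ℝ)..Real.pi, Real.cos ((c : ℝ) * θ) = if c = 0 then Real.pi else 0 := by
  rcases eq_or_ne c 0 with h | h
  · subst h
    simp
  · rw [if_neg h]
    have hc : (c : ℝ) ≠ 0 := Int.cast_ne_zero.mpr h
    rw [integral_comp_mul_left (f := Real.cos) hc, mul_zero, integral_cos]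
    rw [Real.sin_int_mul_pi, Real.sin_zero]
    simp

lemma continuous_coskt (c : ℝ) : Continuous (fun θ : ℝ => Real.cos (c * θ)) :=
  Real.continuous_cos.comp (continuous_const.mul continuous_id)

open intervalIntegral in
lemma integral_cos_zmul_sin_sq (c : ℤ) :
    ∫ θ in (0:ℝ)..Real.pi, Real.cos ((c : ℝ) * θ) * Real.sin θ ^ 2
      = (if c = 0 then Real.pi/2 else 0) - (if c = 2 then Real.pi/4 else 0)
        - (if c = -2 then Real.pi/4 else 0) := by
  have hpt : ∀ θ : ℝ, Real.cos ((c : ℝ) * θ) * Real.sin θ ^ 2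
      = Real.cos ((c : ℝ) * θ)/2 - Real.cos (((c + 2 : ℤ) : ℝ) * θ)/4
        - Real.cos (((c - 2 : ℤ) : ℝ) * θ)/4 := by
    intro θ
    have hs : Real.sin θ ^ 2 = 1/2 - Real.cos (2*θ)/2 := by
      have h1 := Real.cos_sq θ
      have h2 := Real.sin_sq_add_cos_sq θ
      linarith
    have h1 := Real.cos_add ((c : ℝ) * θ) (2*θ)
    have h2 := Real.cos_sub ((c : ℝ) * θ) (2*θ)
    have e1 : (c : ℝ)*θ + 2*θ = ((c + 2 : ℤ) : ℝ)*θ := by push_cast; ring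
    have e2 : (c : ℝ)*θ - 2*θ = ((c - 2 : ℤ) : ℝ)*θ := by push_cast; ring
    rw [e1] at h1
    rw [e2] at h2
    linear_combination Real.cos ((c : ℝ) * θ) * hs + h1/4 + h2/4
  rw [integral_congr (g := fun θ => Real.cos ((c : ℝ) * θ)/2
      - Real.cos (((c + 2 : ℤ) : ℝ) * θ)/4 - Real.cos (((c - 2 : ℤ) : ℝ) * θ)/4)
      (fun θ _ => hpt θ)]
  have i1 : IntervalIntegrable (fun θ => Real.cos ((c : ℝ) * θ)/2) MeasureTheory.volume 0 Real.pi :=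
    (Continuous.div_const (continuous_coskt _) 2).intervalIntegrable 0 Real.pi
  have i2 : IntervalIntegrable (fun θ => Real.cos (((c + 2 : ℤ) : ℝ) * θ)/4)
      MeasureTheory.volume 0 Real.pi :=
    (Continuous.div_const (continuous_coskt _) 4).intervalIntegrable 0 Real.pi
  have i3 : IntervalIntegrable (fun θ => Real.cos (((c - 2 : ℤ) : ℝ) * θ)/4)
      MeasureTheory.volume 0 Real.pi :=
    (Continuous.div_const (continuous_coskt _) 4).intervalIntegrable 0 Real.pi
  rw [integral_sub (i1.sub i2) i3, integral_sub i1 i2, integral_div, integral_div, integral_div]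
  rw [integral_cos_zmul, integral_cos_zmul, integral_cos_zmul]
  split_ifs <;> first | omega | ring

/-- the complex Dirichlet-type kernel -/
noncomputable def Hc (m : ℕ) (θ : ℝ) : ℂ :=
  ∑ t ∈ range (m+1), Complex.exp ((((m : ℝ) - 2 * t) * θ : ℝ) * Complex.I)

lemma Hc_succ (m : ℕ) (θ : ℝ) :
    Hc (m+1) θ = Complex.exp (((((m : ℝ) + 1) * θ : ℝ)) * Complex.I)
      + Complex.exp (((-θ : ℝ)) * Complex.I) * Hc m θ := by
  rw [Hc, Finset.sum_range_succ', Hc, Finset.mul_sum]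
  rw [add_comm]
  congr 1
  · congr 1
    push_cast
    ring
  · apply Finset.sum_congr rfl
    intro t _
    rw [← Complex.exp_add]
    congr 1
    push_cast
    ring

lemma sin_mul_Hc (m : ℕ) (θ : ℝ) :
    Complex.sin θ * Hc m θ = Complex.sin ((((m : ℝ) + 1) * θ : ℝ)) := by
  induction m with
  | zero =>
    rw [Hc]
    simp
  | succ m ih =>
    rw [Hc_succ, mul_add, mul_left_comm, ih]
    rw [Complex.exp_mul_I, Complex.exp_mul_I]
    have e3 : ((((m : ℕ) + 1 : ℕ) : ℝ) + 1) * θ = θ + (((m : ℝ) + 1) * θ) := by push_cast; ring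
    rw [e3, Complex.ofReal_add, Complex.sin_add]
    push_cast
    rw [Complex.cos_neg, Complex.sin_neg]
    ring

lemma Hc_eq_div (m : ℕ) (θ : ℝ) (h : Real.sin θ ≠ 0) :
    ((Real.sin (((m : ℝ) + 1) * θ) / Real.sin θ : ℝ) : ℂ) = Hc m θ := by
  have hs : (Complex.sin (θ : ℂ)) ≠ 0 := by
    rw [← Complex.ofReal_sin]
    exact Complex.ofReal_ne_zero.mpr h
  rw [Complex.ofReal_div, Complex.ofReal_sin, Complex.ofReal_sin]
  rw [div_eq_iff hs, ← sin_mul_Hc m θ]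
  push_cast
  ring

lemma prod_eq_sum_cos {A : Fin n → ℕ} (θ : ℝ) (h : Real.sin θ ≠ 0) :
    ∏ i, (Real.sin (((A i : ℝ) + 1) * θ) / Real.sin θ)
      = ∑ q ∈ J A, Real.cos (((wtZ A q : ℤ) : ℝ) * θ) := by
  have hC : ((∏ i, (Real.sin (((A i : ℝ) + 1) * θ) / Real.sin θ) : ℝ) : ℂ)
      = ∑ q ∈ J A, Complex.exp ((((wtZ A q : ℤ) : ℝ) * θ : ℝ) * Complex.I) := by
    rw [Complex.ofReal_prod]
    rw [Finset.prod_congr rfl (fun i _ => Hc_eq_div (A i) θ h)]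
    rw [show (fun i => Hc (A i) θ) = fun i => ∑ t ∈ range (A i + 1),
      Complex.exp ((((A i : ℝ) - 2 * t) * θ : ℝ) * Complex.I) from rfl]
    rw [Finset.prod_univ_sum]
    apply Finset.sum_congr rfl
    intro q _
    rw [← Complex.exp_sum]
    congr 1
    rw [wtZ]
    push_cast
    rw [Finset.sum_mul, Finset.sum_mul]
  have hre := congrArg Complex.re hC
  rw [Complex.ofReal_re, Complex.re_sum] at hre
  rw [hre]
  apply Finset.sum_congr rfl
  intro q _
  exact Complex.exp_ofReal_mul_I_re _

end Alpha


section Assemble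

lemma sum_get_eq (a : List ℕ) : ∑ i, a.get i = a.sum := by
  have h := List.sum_ofFn (f := fun i : Fin a.length => a.get i)
  rw [List.ofFn_get] at h
  exact h.symm

lemma wt_compl {A q : Fin n → ℕ} (hbd : ∀ i, q i ≤ A i) :
    wtZ A (fun i => A i - q i) = - wtZ A q := by
  rw [wtZ, wtZ, ← Finset.sum_neg_distrib]
  apply Finset.sum_congr rfl
  intro i _
  have := hbd i
  omega

lemma sym_card (A : Fin n → ℕ) :
    ((J A).filter (fun q => wtZ A q = 2)).card = ((J A).filter (fun q => wtZ A q = -2)).card := by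
  apply Finset.card_nbij' (i := fun q => fun i => A i - q i) (j := fun q => fun i => A i - q i)
  · intro q hq
    rw [mem_coe, mem_filter, memJ] at hq ⊢
    obtain ⟨hbd, hw⟩ := hq
    exact ⟨fun i => by dsimp only; omega, by simp [wt_compl hbd, hw]⟩
  · intro q hq
    rw [mem_coe, mem_filter, memJ] at hq ⊢
    obtain ⟨hbd, hw⟩ := hq
    exact ⟨fun i => by dsimp only; omega, by simp [wt_compl hbd, hw]⟩
  · intro q hq
    rw [mem_coe, mem_filter, memJ] at hq
    funext i
    have := hq.1 i
    simp only
    omega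
  · intro q hq
    rw [mem_coe, mem_filter, memJ] at hq
    funext i
    have := hq.1 i
    simp only
    omega

lemma split_card (A : Fin n → ℕ) :
    ((J A).filter (fun q => wtZ A q = 0)).card
      = ((J A).filter (fun q => wtZ A q = 0 ∧ Ball A q)).card
        + ((J A).filter (fun q => wtZ A q = 0 ∧ ¬ Ball A q)).card := by
  have h := Finset.card_filter_add_card_filter_not
    (s := (J A).filter (fun q => wtZ A q = 0)) (p := fun q => Ball A q)
  rw [Finset.filter_filter, Finset.filter_filter] at h
  omega

end Assemble

end KIF


open KIF Finset in
open Real in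
/-- **Integral formula for Kostka numbers.**  For positive integers `a₁,…,aₘ`,
`K(a₁,…,aₘ) = (2/π) ∫₀^π (∏ᵢ sin((aᵢ+1)θ)/sin θ) · sin²θ dθ`. -/
theorem kostka_integral_formula (a : List ℕ) (ha : ∀ x ∈ a, 0 < x) :
    (kostka a : ℝ) =
      (2 / π) * ∫ θ in (0:ℝ)..π,
        (a.map (fun n => sin (((n : ℝ) + 1) * θ) / sin θ)).prod * (sin θ) ^ 2 := by
  classical
  set A : Fin a.length → ℕ := fun i => a.get i with hA
  have hcoe : ∀ θ : ℝ, (a.map (fun n => Real.sin (((n : ℝ) + 1) * θ) / Real.sin θ)).prod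
      = (a.map (fun m : ℕ => Real.sin (((m : ℝ) + 1) * θ) / Real.sin θ)).prod := by
    intro θ
    simp only [List.pure_def, List.bind_eq_flatMap, ← List.map_eq_flatMap, List.map_map]
    rfl
  simp only [hcoe]
  have hmap : ∀ θ : ℝ, (a.map (fun m : ℕ => Real.sin (((m : ℝ) + 1) * θ) / Real.sin θ)).prod
      = ∏ i, (Real.sin (((A i : ℝ) + 1) * θ) / Real.sin θ) := by
    intro θ
    conv_lhs => rw [← List.ofFn_get a, List.map_ofFn]
    rw [List.prod_ofFn]
    rfl
  have hpi : ∀ᵐ θ : ℝ ∂MeasureTheory.volume, θ ≠ π := by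
    rw [MeasureTheory.ae_iff]
    have : {θ : ℝ | ¬ θ ≠ π} = {π} := by
      ext θ
      simp
    rw [this]
    exact Real.volume_singleton
  have hint : (∫ θ in (0:ℝ)..π,
        (a.map (fun m : ℕ => Real.sin (((m : ℝ) + 1) * θ) / Real.sin θ)).prod * (Real.sin θ) ^ 2)
      = ∑ q ∈ J A, ∫ θ in (0:ℝ)..π,
          Real.cos (((wtZ A q : ℤ) : ℝ) * θ) * Real.sin θ ^ 2 := by
    rw [← intervalIntegral.integral_finset_sum
      (f := fun q θ => Real.cos (((wtZ A q : ℤ) : ℝ) * θ) * Real.sin θ ^ 2) (fun q _ =>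
      (((continuous_coskt _).mul (Real.continuous_sin.pow 2)).intervalIntegrable 0 π :
        IntervalIntegrable (fun θ => Real.cos (((wtZ A q : ℤ) : ℝ) * θ) * Real.sin θ ^ 2)
          MeasureTheory.volume 0 π))]
    apply intervalIntegral.integral_congr_ae
    filter_upwards [hpi] with θ hθ hmem
    rw [Set.uIoc_of_le Real.pi_pos.le] at hmem
    have hsin : Real.sin θ ≠ 0 :=
      ne_of_gt (Real.sin_pos_of_pos_of_lt_pi hmem.1 (lt_of_le_of_ne hmem.2 hθ))
    rw [hmap θ, prod_eq_sum_cos θ hsin, Finset.sum_mul]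
  rw [hint, Finset.sum_congr rfl (fun q _ => integral_cos_zmul_sin_sq (wtZ A q))]
  have esum : ∀ (t : ℤ) (r : ℝ), (∑ q ∈ J A, if wtZ A q = t then r else 0)
      = (((J A).filter (fun q => wtZ A q = t)).card : ℝ) * r := by
    intro t r
    rw [← Finset.sum_filter, Finset.sum_const, nsmul_eq_mul]
  rw [Finset.sum_sub_distrib, Finset.sum_sub_distrib, esum, esum, esum]
  by_cases h2 : a.sum % 2 = 0
  · have hg : kostka a = ((J A).filter (fun q => wtZ A q = 0 ∧ Ball A q)).card :=
      gamma_card a h2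
    have hb := beta_card (A := A)
    have hN0 : ((((J A).filter (fun q => wtZ A q = 0)).card : ℕ) : ℝ)
        = ((((J A).filter (fun q => wtZ A q = 0 ∧ Ball A q)).card : ℕ) : ℝ)
          + ((((J A).filter (fun q => wtZ A q = -2)).card : ℕ) : ℝ) := by
      have h := split_card A
      rw [hb] at h
      exact_mod_cast congrArg (Nat.cast : ℕ → ℝ) h
    have hN2 : ((((J A).filter (fun q => wtZ A q = 2)).card : ℕ) : ℝ)
        = ((((J A).filter (fun q => wtZ A q = -2)).card : ℕ) : ℝ) :=
      congrArg (Nat.cast : ℕ → ℝ) (sym_card A)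
    rw [hN0, hN2, hg]
    have hpi0 : (π : ℝ) ≠ 0 := Real.pi_ne_zero
    field_simp
    ring
  · rw [kostka, if_neg h2]
    have hempty : ∀ t : ℤ, t % 2 = 0 → (J A).filter (fun q => wtZ A q = t) = ∅ := by
      intro t ht
      rw [Finset.filter_eq_empty_iff]
      intro q _
      intro hwt
      rw [wtZ_eq] at hwt
      have hcast : ∑ i, (A i : ℤ) = (a.sum : ℤ) := by
        rw [← Nat.cast_sum]
        exact_mod_cast congrArg (Nat.cast : ℕ → ℤ) (sum_get_eq a)
      rw [hcast] at hwt
      omega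
    rw [hempty 0 rfl, hempty 2 rfl, hempty (-2) (by decide)]
    simp
end

section
/- For every integer μ ≥ 14, the integral ∫_0^{π/2} (sin(3θ)/sin θ)^μ · ( sin(5θ)·sin θ − sin²(2θ) ) dθ is strictly positive. -/
open Real intervalIntegral

noncomputable def G2 (mu : ℕ) (θ : ℝ) : ℝ :=
  (1 + 2 * Real.cos (2*θ)) ^ mu * ((1 - Real.cos (2*θ)) * (2 * Real.cos (2*θ)^2 - 3/2))

noncomputable def JJ (mu : ℕ) : ℝ := ∫ θ in (0:ℝ)..(π/2), G2 mu θ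

lemma contG2 (mu : ℕ) : Continuous (G2 mu) := by unfold G2; fun_prop

lemma intG2 (mu : ℕ) : IntervalIntegrable (G2 mu) MeasureTheory.volume 0 (π/2) :=
  (contG2 mu).intervalIntegrable 0 (π/2)

lemma cw0 : ∫ x in (0:ℝ)..π, cos x ^ 0 = π := by simp
lemma cw1 : ∫ x in (0:ℝ)..π, cos x ^ 1 = 0 := by simp
lemma cw2 : ∫ x in (0:ℝ)..π, cos x ^ 2 = 1*π/2 := by simp [Real.sin_pi]

lemma cw3 : ∫ x in (0:ℝ)..π, cos x ^ 3 = 0 := by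
  simp [integral_cos_pow_three, Real.sin_pi]

lemma cw4 : ∫ x in (0:ℝ)..π, cos x ^ 4 = 3*π/8 := by
  have h := integral_cos_pow (a := (0:ℝ)) (b := π) (n := 2)
  rw [cw2] at h
  norm_num [Real.sin_pi] at h
  linarith

lemma cw5 : ∫ x in (0:ℝ)..π, cos x ^ 5 = 0 := by
  have h := integral_cos_pow (a := (0:ℝ)) (b := π) (n := 3)
  rw [cw3] at h
  norm_num [Real.sin_pi] at h
  linarith

lemma cw6 : ∫ x in (0:ℝ)..π, cos x ^ 6 = 5*π/16 := by
  have h := integral_cos_pow (a := (0:ℝ)) (b := π) (n := 4)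
  rw [cw4] at h
  norm_num [Real.sin_pi] at h
  linarith

lemma cw7 : ∫ x in (0:ℝ)..π, cos x ^ 7 = 0 := by
  have h := integral_cos_pow (a := (0:ℝ)) (b := π) (n := 5)
  rw [cw5] at h
  norm_num [Real.sin_pi] at h
  linarith

lemma cw8 : ∫ x in (0:ℝ)..π, cos x ^ 8 = 35*π/128 := by
  have h := integral_cos_pow (a := (0:ℝ)) (b := π) (n := 6)
  rw [cw6] at h
  norm_num [Real.sin_pi] at h
  linarith

lemma cw9 : ∫ x in (0:ℝ)..π, cos x ^ 9 = 0 := by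
  have h := integral_cos_pow (a := (0:ℝ)) (b := π) (n := 7)
  rw [cw7] at h
  norm_num [Real.sin_pi] at h
  linarith

lemma cw10 : ∫ x in (0:ℝ)..π, cos x ^ 10 = 63*π/256 := by
  have h := integral_cos_pow (a := (0:ℝ)) (b := π) (n := 8)
  rw [cw8] at h
  norm_num [Real.sin_pi] at h
  linarith

lemma cw11 : ∫ x in (0:ℝ)..π, cos x ^ 11 = 0 := by
  have h := integral_cos_pow (a := (0:ℝ)) (b := π) (n := 9)
  rw [cw9] at h
  norm_num [Real.sin_pi] at h
  linarith

lemma cw12 : ∫ x in (0:ℝ)..π, cos x ^ 12 = 231*π/1024 := by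
  have h := integral_cos_pow (a := (0:ℝ)) (b := π) (n := 10)
  rw [cw10] at h
  norm_num [Real.sin_pi] at h
  linarith

lemma cw13 : ∫ x in (0:ℝ)..π, cos x ^ 13 = 0 := by
  have h := integral_cos_pow (a := (0:ℝ)) (b := π) (n := 11)
  rw [cw11] at h
  norm_num [Real.sin_pi] at h
  linarith

lemma cw14 : ∫ x in (0:ℝ)..π, cos x ^ 14 = 429*π/2048 := by
  have h := integral_cos_pow (a := (0:ℝ)) (b := π) (n := 12)
  rw [cw12] at h
  norm_num [Real.sin_pi] at h
  linarith

lemma cw15 : ∫ x in (0:ℝ)..π, cos x ^ 15 = 0 := by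
  have h := integral_cos_pow (a := (0:ℝ)) (b := π) (n := 13)
  rw [cw13] at h
  norm_num [Real.sin_pi] at h
  linarith

lemma cw16 : ∫ x in (0:ℝ)..π, cos x ^ 16 = 6435*π/32768 := by
  have h := integral_cos_pow (a := (0:ℝ)) (b := π) (n := 14)
  rw [cw14] at h
  norm_num [Real.sin_pi] at h
  linarith

lemma cw17 : ∫ x in (0:ℝ)..π, cos x ^ 17 = 0 := by
  have h := integral_cos_pow (a := (0:ℝ)) (b := π) (n := 15)
  rw [cw15] at h
  norm_num [Real.sin_pi] at h
  linarith

lemma cw18 : ∫ x in (0:ℝ)..π, cos x ^ 18 = 12155*π/65536 := by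
  have h := integral_cos_pow (a := (0:ℝ)) (b := π) (n := 16)
  rw [cw16] at h
  norm_num [Real.sin_pi] at h
  linarith

lemma cosK (j : ℕ) : ∫ θ in (0:ℝ)..(π/2), cos (2*θ) ^ j = (1/2) * ∫ x in (0:ℝ)..π, cos x ^ j := by
  have h := integral_comp_mul_left (a := (0:ℝ)) (b := π/2) (fun x => cos x ^ j) (c := 2) two_ne_zero
  rw [show (2:ℝ)*(π/2) = π by ring] at h
  norm_num at h
  rw [h]

noncomputable def p14 : ℕ → ℝ := fun j => if j = 0 then (-3/2) else if j = 1 then (-81/2) else if j = 2 then (-502) else if j = 3 then (-3768) else if j = 4 then (-18984) else if j = 5 then (-66976) else if j = 6 then (-165984) else if j = 7 then (-274560) else if j = 8 then (-237952) else if j = 9 then (109824) else if j = 10 then (658944) else if j = 11 then (931840) else if j = 12 then (559104) else if j = 13 then (-172032) else if j = 14 then (-598016) else if j = 15 then (-491520) else if j = 16 then (-196608) else if j = 17 then (-32768) else 0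

lemma expand14 (θ : ℝ) : G2 14 θ = ∑ j ∈ Finset.range 18, p14 j * Real.cos (2*θ)^j := by
  simp only [G2, Finset.sum_range_succ, Finset.sum_range_zero, p14]
  norm_num
  ring

lemma J14 : JJ 14 = 207*π/4 := by
  have h1 : JJ 14 = ∑ j ∈ Finset.range 18, p14 j * ((1/2) * ∫ x in (0:ℝ)..π, cos x ^ j) := by
    rw [JJ, intervalIntegral.integral_congr (g := fun θ => ∑ j ∈ Finset.range 18, p14 j * Real.cos (2*θ)^j) (fun θ _ => expand14 θ),
      intervalIntegral.integral_finset_sum (fun j _ => Continuous.intervalIntegrable (by fun_prop) _ _)]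
    simp only [intervalIntegral.integral_const_mul, cosK]
  rw [h1]
  simp only [Finset.sum_range_succ, Finset.sum_range_zero, p14]
  rw [cw0, cw1, cw2, cw3, cw4, cw5, cw6, cw7, cw8, cw9, cw10, cw11, cw12, cw13, cw14, cw15, cw16, cw17]
  norm_num
  ring

noncomputable def p15 : ℕ → ℝ := fun j => if j = 0 then (-3/2) else if j = 1 then (-87/2) else if j = 2 then (-583) else if j = 3 then (-4772) else if j = 4 then (-26520) else if j = 5 then (-104944) else if j = 6 then (-299936) else if j = 7 then (-606528) else if j = 8 then (-787072) else if j = 9 then (-366080) else if j = 10 then (878592) else if j = 11 then (2249728) else if j = 12 then (2422784) else if j = 13 then (946176) else if j = 14 then (-942080) else if j = 15 then (-1687552) else if j = 16 then (-1179648) else if j = 17 then (-425984) else if j = 18 then (-65536) else 0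

lemma expand15 (θ : ℝ) : G2 15 θ = ∑ j ∈ Finset.range 19, p15 j * Real.cos (2*θ)^j := by
  simp only [G2, Finset.sum_range_succ, Finset.sum_range_zero, p15]
  norm_num
  ring

lemma J15 : JJ 15 = 1212*π := by
  have h1 : JJ 15 = ∑ j ∈ Finset.range 19, p15 j * ((1/2) * ∫ x in (0:ℝ)..π, cos x ^ j) := by
    rw [JJ, intervalIntegral.integral_congr (g := fun θ => ∑ j ∈ Finset.range 19, p15 j * Real.cos (2*θ)^j) (fun θ _ => expand15 θ),
      intervalIntegral.integral_finset_sum (fun j _ => Continuous.intervalIntegrable (by fun_prop) _ _)]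
    simp only [intervalIntegral.integral_const_mul, cosK]
  rw [h1]
  simp only [Finset.sum_range_succ, Finset.sum_range_zero, p15]
  rw [cw0, cw1, cw2, cw3, cw4, cw5, cw6, cw7, cw8, cw9, cw10, cw11, cw12, cw13, cw14, cw15, cw16, cw17, cw18]
  norm_num
  ring

lemma step2 (mu : ℕ) : 2*JJ (mu+1) + 2*JJ mu - 2*π ≤ JJ (mu+2) := by
  have key : ∀ θ ∈ Set.Icc (0:ℝ) (π/2), (-4:ℝ) ≤ G2 (mu+2) θ - (2 * G2 (mu+1) θ + 2 * G2 mu θ) := by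
    intro θ _
    have hc1 : -1 ≤ Real.cos (2*θ) := neg_one_le_cos _
    have hc2 : Real.cos (2*θ) ≤ 1 := cos_le_one _
    set c := Real.cos (2*θ) with hcd
    have hid : G2 (mu+2) θ - (2 * G2 (mu+1) θ + 2 * G2 mu θ)
        = (1+2*c)^mu * ((1-c) * (4*c^2-3)^2 / 2) := by
      simp only [G2, ← hcd]; ring
    rw [hid]
    rcases le_or_gt 0 (1+2*c) with h | h
    · have h1 : 0 ≤ (1+2*c)^mu := pow_nonneg h mu
      have h2 : 0 ≤ (1-c) * (4*c^2-3)^2 / 2 := by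
        have := mul_nonneg (by linarith : (0:ℝ) ≤ 1-c) (sq_nonneg (4*c^2-3))
        linarith
      nlinarith [mul_nonneg h1 h2]
    · have habs : |(1+2*c)^mu| ≤ 1 := by
        rw [abs_pow]
        apply pow_le_one₀ (abs_nonneg _)
        rw [abs_le]; constructor <;> nlinarith
      have h1 : -1 ≤ (1+2*c)^mu := (abs_le.mp habs).1
      have h1' : (1+2*c)^mu ≤ 1 := (abs_le.mp habs).2
      have hc3 : c < -1/2 := by nlinarith
      have hT0 : 0 ≤ (1-c) * (4*c^2-3)^2 / 2 := by
        have := mul_nonneg (by linarith : (0:ℝ) ≤ 1-c) (sq_nonneg (4*c^2-3))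
        linarith
      have hx1 : 4*c^2-3 ≤ 1 := by nlinarith
      have hx2 : -2 ≤ 4*c^2-3 := by nlinarith
      have hsq : (4*c^2-3)^2 ≤ 4 := by nlinarith
      have hT4 : (1-c) * (4*c^2-3)^2 / 2 ≤ 4 := by
        have : (1-c) * (4*c^2-3)^2 ≤ 2 * 4 :=
          mul_le_mul (by linarith) hsq (sq_nonneg _) (by norm_num)
        linarith
      nlinarith [mul_nonneg (by linarith : (0:ℝ) ≤ (1+2*c)^mu + 1) hT0]
  have hsub : ∫ θ in (0:ℝ)..(π/2), (G2 (mu+2) θ - (2 * G2 (mu+1) θ + 2 * G2 mu θ))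
      = JJ (mu+2) - (2*JJ (mu+1) + 2*JJ mu) := by
    rw [intervalIntegral.integral_sub (intG2 _) (((intG2 _).const_mul 2).add ((intG2 _).const_mul 2)),
      intervalIntegral.integral_add ((intG2 _).const_mul 2) ((intG2 _).const_mul 2),
      intervalIntegral.integral_const_mul, intervalIntegral.integral_const_mul]
    rfl
  have hmono := intervalIntegral.integral_mono_on (by positivity : (0:ℝ) ≤ π/2)
    (_root_.intervalIntegrable_const)
    ((intG2 _).sub (((intG2 _).const_mul 2).add ((intG2 _).const_mul 2))) key
  rw [hsub, intervalIntegral.integral_const, smul_eq_mul] at hmono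
  nlinarith [hmono]

lemma JJpos : ∀ n : ℕ, 3 ≤ JJ (14 + n) := by
  have H : ∀ n : ℕ, 3 ≤ JJ (14 + n) ∧ 3 ≤ JJ (14 + n + 1) := by
    intro n
    induction n with
    | zero =>
      constructor
      · rw [show 14 + 0 = 14 from rfl, J14]; nlinarith [pi_gt_d6]
      · rw [show 14 + 0 + 1 = 15 from rfl, J15]; nlinarith [pi_gt_d6]
    | succ k ih =>
      refine ⟨by rw [show 14 + (k+1) = 14 + k + 1 by ring]; exact ih.2, ?_⟩
      have hs := step2 (14 + k)
      have hpi : π < 3.15 := pi_lt_d2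
      rw [show 14 + (k+1) + 1 = 14 + k + 2 by ring]
      nlinarith [ih.1, ih.2]
  exact fun n => (H n).1

open Real in
/-- For every integer `μ ≥ 14`,
`∫₀^{π/2} (sin 3θ / sin θ)^μ · (sin 5θ · sin θ − sin² 2θ) dθ > 0`. -/
theorem integral_a_two_pos (μ : ℕ) (hμ : 14 ≤ μ) :
    0 < ∫ θ in (0:ℝ)..(π / 2),
      (sin (3 * θ) / sin θ) ^ μ * (sin (5 * θ) * sin θ - (sin (2 * θ)) ^ 2) := by
  obtain ⟨n, rfl⟩ : ∃ n, μ = 14 + n := ⟨μ - 14, by omega⟩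
  have hJ := JJpos n
  have heq : (∫ θ in (0:ℝ)..(π / 2),
      (sin (3 * θ) / sin θ) ^ (14+n) * (sin (5 * θ) * sin θ - (sin (2 * θ)) ^ 2)) = JJ (14 + n) := by
    rw [JJ]
    apply intervalIntegral.integral_congr
    intro θ hθ
    rw [Set.uIcc_of_le (by positivity : (0:ℝ) ≤ π/2)] at hθ
    have h2 : sin (5 * θ) * sin θ - (sin (2 * θ)) ^ 2
        = (1 - Real.cos (2*θ)) * (2 * Real.cos (2*θ)^2 - 3/2) := by
      rw [show (5:ℝ)*θ = 2*θ + (2*θ + θ) by ring, sin_add, sin_add, cos_add,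
        sin_two_mul, cos_two_mul]
      linear_combination (1 - 16*cos θ^2 + 16*cos θ^4 - 4*sin θ^2*cos θ^2) * (sin_sq_add_cos_sq θ)
    rcases eq_or_lt_of_le hθ.1 with h0 | h0
    · simp only [G2, ← h0]
      norm_num
    · have hs : 0 < sin θ := sin_pos_of_pos_of_lt_pi h0 (by nlinarith [hθ.2, pi_pos])
      have h3 : sin (3*θ) = sin θ * (1 + 2 * Real.cos (2*θ)) := by
        rw [sin_three_mul, cos_two_mul]
        linear_combination (-4*sin θ) * (sin_sq_add_cos_sq θ)
      simp only [G2]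
      rw [h3, mul_div_cancel_left₀ _ hs.ne', h2]
  rw [heq]
  linarith
end

section
/- For every integer μ ≥ 14, ∫_0^{π/3} (sin(3θ)/sin θ)^μ · ( sin(5θ)·sin θ − sin²(2θ) ) dθ > π/4. -/
open Real Set MeasureTheory intervalIntegral

noncomputable def Phi : ℝ → ℝ := fun u => (1594323 : ℝ) * u ^ 3 + ((-165809592 : ℝ)/5) * u ^ 5 + ((2278819008 : ℝ)/7) * u ^ 7 + (-1992864384 : ℝ) * u ^ 9 + ((93541174272 : ℝ)/11) * u ^ 11 + (-26806671360 : ℝ) * u ^ 13 + ((322808758272 : ℝ)/5) * u ^ 15 + ((-2059827314688 : ℝ)/17) * u ^ 17 + ((3402301833216 : ℝ)/19) * u ^ 19 + ((-1463551524864 : ℝ)/7) * u ^ 21 + ((4421018714112 : ℝ)/23) * u ^ 23 + ((-3442005245952 : ℝ)/25) * u ^ 25 + ((225955545088 : ℝ)/3) * u ^ 27 + ((-882213126144 : ℝ)/29) * u ^ 29 + ((265214230528 : ℝ)/31) * u ^ 31 + ((-49392123904 : ℝ)/33) * u ^ 33 + ((4294967296 : ℝ)/35) * u ^ 35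

noncomputable def Gf (n : ℕ) : ℝ → ℝ := fun u => (3 - 4*u^2)^n * (u^2*(1 - 16*u^2 + 16*u^4)) / Real.sqrt (1 - u^2)

set_option maxHeartbeats 1000000 in
lemma hasDerivAt_Phi (u : ℝ) :
    HasDerivAt Phi ((3 - 4*u^2)^14 * (u^2*(1 - 16*u^2 + 16*u^4))) u := by
  have h : HasDerivAt (fun u : ℝ => (1594323 : ℝ) * u ^ 3 + ((-165809592 : ℝ)/5) * u ^ 5 + ((2278819008 : ℝ)/7) * u ^ 7 + (-1992864384 : ℝ) * u ^ 9 + ((93541174272 : ℝ)/11) * u ^ 11 + (-26806671360 : ℝ) * u ^ 13 + ((322808758272 : ℝ)/5) * u ^ 15 + ((-2059827314688 : ℝ)/17) * u ^ 17 + ((3402301833216 : ℝ)/19) * u ^ 19 + ((-1463551524864 : ℝ)/7) * u ^ 21 + ((4421018714112 : ℝ)/23) * u ^ 23 + ((-3442005245952 : ℝ)/25) * u ^ 25 + ((225955545088 : ℝ)/3) * u ^ 27 + ((-882213126144 : ℝ)/29) * u ^ 29 + ((265214230528 : ℝ)/31) * u ^ 31 + ((-49392123904 : ℝ)/33) * u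 ^ 33 + ((4294967296 : ℝ)/35) * u ^ 35)
      ((1594323 : ℝ) * ((((3:ℕ)) : ℝ) * u ^ (3 - 1)) + ((-165809592 : ℝ)/5) * ((((5:ℕ)) : ℝ) * u ^ (5 - 1)) + ((2278819008 : ℝ)/7) * ((((7:ℕ)) : ℝ) * u ^ (7 - 1)) + (-1992864384 : ℝ) * ((((9:ℕ)) : ℝ) * u ^ (9 - 1)) + ((93541174272 : ℝ)/11) * ((((11:ℕ)) : ℝ) * u ^ (11 - 1)) + (-26806671360 : ℝ) * ((((13:ℕ)) : ℝ) * u ^ (13 - 1)) + ((322808758272 : ℝ)/5) * ((((15:ℕ)) : ℝ) * u ^ (15 - 1)) + ((-2059827314688 : ℝ)/17) * ((((17:ℕ)) : ℝ) * u ^ (17 - 1)) + ((3402301833216 : ℝ)/19) * ((((19:ℕ)) : ℝ) * u ^ (19 - 1)) + ((-1463551524864 : ℝ)/7) * ((((21:ℕ)) : ℝ) * u ^ (21 - 1)) + ((4421018714112 : ℝ)/23) * ((((23:ℕ)) : ℝ) * u ^ (23 - 1)) + ((-3442005245952 : ℝ)/25) * ((((25:ℕ)) : ℝ) * u ^ (25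 - 1)) + ((225955545088 : ℝ)/3) * ((((27:ℕ)) : ℝ) * u ^ (27 - 1)) + ((-882213126144 : ℝ)/29) * ((((29:ℕ)) : ℝ) * u ^ (29 - 1)) + ((265214230528 : ℝ)/31) * ((((31:ℕ)) : ℝ) * u ^ (31 - 1)) + ((-49392123904 : ℝ)/33) * ((((33:ℕ)) : ℝ) * u ^ (33 - 1)) + ((4294967296 : ℝ)/35) * ((((35:ℕ)) : ℝ) * u ^ (35 - 1))) u :=
    ((((((((((((((((((hasDerivAt_pow 3 u).const_mul (1594323 : ℝ)).add ((hasDerivAt_pow 5 u).const_mul ((-165809592 : ℝ)/5))).add ((hasDerivAt_pow 7 u).const_mul ((2278819008 : ℝ)/7))).add ((hasDerivAt_pow 9 u).const_mul (-1992864384 : ℝ))).add ((hasDerivAt_pow 11 u).const_mul ((93541174272 : ℝ)/11))).add ((hasDerivAt_pow 13 u).const_mul (-26806671360 : ℝ))).add ((hasDerivAt_pow 15 u).const_mul ((322808758272 : ℝ)/5))).add ((hasDerivAt_pow 17 u).const_mul ((-2059827314688 : ℝ)/17))).add ((hasDerivAt_pow 19 u).const_mul ((3402301833216 : ℝ)/19))).add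 ((hasDerivAt_pow 21 u).const_mul ((-1463551524864 : ℝ)/7))).add ((hasDerivAt_pow 23 u).const_mul ((4421018714112 : ℝ)/23))).add ((hasDerivAt_pow 25 u).const_mul ((-3442005245952 : ℝ)/25))).add ((hasDerivAt_pow 27 u).const_mul ((225955545088 : ℝ)/3))).add ((hasDerivAt_pow 29 u).const_mul ((-882213126144 : ℝ)/29))).add ((hasDerivAt_pow 31 u).const_mul ((265214230528 : ℝ)/31))).add ((hasDerivAt_pow 33 u).const_mul ((-49392123904 : ℝ)/33))).add ((hasDerivAt_pow 35 u).const_mul ((4294967296 : ℝ)/35)))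
  have e : ((1594323 : ℝ) * ((((3:ℕ)) : ℝ) * u ^ (3 - 1)) + ((-165809592 : ℝ)/5) * ((((5:ℕ)) : ℝ) * u ^ (5 - 1)) + ((2278819008 : ℝ)/7) * ((((7:ℕ)) : ℝ) * u ^ (7 - 1)) + (-1992864384 : ℝ) * ((((9:ℕ)) : ℝ) * u ^ (9 - 1)) + ((93541174272 : ℝ)/11) * ((((11:ℕ)) : ℝ) * u ^ (11 - 1)) + (-26806671360 : ℝ) * ((((13:ℕ)) : ℝ) * u ^ (13 - 1)) + ((322808758272 : ℝ)/5) * ((((15:ℕ)) : ℝ) * u ^ (15 - 1)) + ((-2059827314688 : ℝ)/17) * ((((17:ℕ)) : ℝ) * u ^ (17 - 1)) + ((3402301833216 : ℝ)/19) * ((((19:ℕ)) : ℝ) * u ^ (19 - 1)) + ((-1463551524864 : ℝ)/7) * ((((21:ℕ)) : ℝ) * u ^ (21 - 1)) + ((4421018714112 : ℝ)/23) * ((((23:ℕ)) : ℝ) * u ^ (23 - 1)) + ((-3442005245952 : ℝ)/25) * ((((25:ℕ)) : ℝ) * u ^ (25 - 1)) + ((225955545088 : ℝ)/3) * ((((27:ℕ))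 : ℝ) * u ^ (27 - 1)) + ((-882213126144 : ℝ)/29) * ((((29:ℕ)) : ℝ) * u ^ (29 - 1)) + ((265214230528 : ℝ)/31) * ((((31:ℕ)) : ℝ) * u ^ (31 - 1)) + ((-49392123904 : ℝ)/33) * ((((33:ℕ)) : ℝ) * u ^ (33 - 1)) + ((4294967296 : ℝ)/35) * ((((35:ℕ)) : ℝ) * u ^ (35 - 1))) = (3 - 4*u^2)^14 * (u^2*(1 - 16*u^2 + 16*u^4)) := by
    push_cast
    ring
  rw [← e]
  exact h

lemma integral_P (a b : ℝ) :
    ∫ u in a..b, (3 - 4*u^2)^14 * (u^2*(1 - 16*u^2 + 16*u^4)) = Phi b - Phi a :=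
  integral_eq_sub_of_hasDerivAt (fun u _ => hasDerivAt_Phi u)
    ((Continuous.intervalIntegrable (by fun_prop) a b))

lemma contOn_Gf (n : ℕ) : ContinuousOn (Gf n) (Icc (0:ℝ) 0.87) := by
  apply ContinuousOn.div (by fun_prop) (by fun_prop)
  intro x hx
  have h1 : 0 < 1 - x^2 := by nlinarith [hx.1, hx.2]
  exact (Real.sqrt_pos.mpr h1).ne'

lemma Gf_intble (n : ℕ) {a b : ℝ} (h1 : 0 ≤ a) (h2 : a ≤ b) (h3 : b ≤ 0.87) :
    IntervalIntegrable (Gf n) volume a b := by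
  apply ContinuousOn.intervalIntegrable
  apply (contOn_Gf _).mono
  rw [Set.uIcc_of_le h2]
  exact Set.Icc_subset_Icc h1 h3

lemma inv_sqrt_le {u q : ℝ} (hq : 0 < q) (h : q^2 ≤ 1 - u^2) :
    (Real.sqrt (1 - u^2))⁻¹ ≤ q⁻¹ := by
  have hs : q ≤ Real.sqrt (1 - u^2) := (Real.le_sqrt hq.le (by nlinarith)).mpr h
  exact inv_anti₀ hq hs

lemma key_pos (m : ℕ) {β u : ℝ} (hβ0 : 0 ≤ β) (hwβ : β ≤ 3 - 4*u^2)
    (hN : 0 ≤ u^2*(1 - 16*u^2 + 16*u^4)) (hu : u^2 < 1) :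
    β^m * ((3 - 4*u^2)^14 * (u^2*(1 - 16*u^2 + 16*u^4))) ≤ Gf (14+m) u := by
  have hs0 : 0 < Real.sqrt (1 - u^2) := Real.sqrt_pos.mpr (by linarith)
  have hs1 : Real.sqrt (1 - u^2) ≤ 1 := Real.sqrt_le_one.mpr (by nlinarith [sq_nonneg u])
  have hw0 : 0 ≤ 3 - 4*u^2 := le_trans hβ0 hwβ
  have h1 : β^m ≤ (3 - 4*u^2)^m := pow_le_pow_left₀ hβ0 hwβ m
  have h2 : β^m * ((3 - 4*u^2)^14 * (u^2*(1 - 16*u^2 + 16*u^4)))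
      ≤ (3 - 4*u^2)^m * ((3 - 4*u^2)^14 * (u^2*(1 - 16*u^2 + 16*u^4))) :=
    mul_le_mul_of_nonneg_right h1 (mul_nonneg (pow_nonneg hw0 14) hN)
  have h3 : (3 - 4*u^2)^(14+m) * (u^2*(1 - 16*u^2 + 16*u^4))
      ≤ Gf (14+m) u := le_div_self (mul_nonneg (pow_nonneg hw0 _) hN) hs0 hs1
  calc β^m * ((3 - 4*u^2)^14 * (u^2*(1 - 16*u^2 + 16*u^4)))
      ≤ (3 - 4*u^2)^m * ((3 - 4*u^2)^14 * (u^2*(1 - 16*u^2 + 16*u^4))) := h2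
    _ = (3 - 4*u^2)^(14+m) * (u^2*(1 - 16*u^2 + 16*u^4)) := by rw [pow_add]; ring
    _ ≤ Gf (14+m) u := h3

lemma key_neg (m : ℕ) {β c u : ℝ} (hw0 : 0 ≤ 3 - 4*u^2) (hwβ : 3 - 4*u^2 ≤ β)
    (hN : u^2*(1 - 16*u^2 + 16*u^4) ≤ 0) (hc : (Real.sqrt (1 - u^2))⁻¹ ≤ c)
    (hu : u^2 < 1) :
    (β^m * c) * ((3 - 4*u^2)^14 * (u^2*(1 - 16*u^2 + 16*u^4))) ≤ Gf (14+m) u := by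
  have hs0 : 0 < Real.sqrt (1 - u^2) := Real.sqrt_pos.mpr (by linarith)
  have hsi : 0 < (Real.sqrt (1 - u^2))⁻¹ := inv_pos.mpr hs0
  have h1 : (3 - 4*u^2)^m ≤ β^m := pow_le_pow_left₀ hw0 hwβ m
  have h2 : (3 - 4*u^2)^m * (Real.sqrt (1 - u^2))⁻¹ ≤ β^m * c :=
    mul_le_mul h1 hc hsi.le (pow_nonneg (hw0.trans hwβ) m)
  have h3 : (3 - 4*u^2)^14 * (u^2*(1 - 16*u^2 + 16*u^4)) ≤ 0 := by
    nlinarith [pow_nonneg hw0 14, hN]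
  have h4 := mul_le_mul_of_nonpos_right h2 h3
  calc (β^m * c) * ((3 - 4*u^2)^14 * (u^2*(1 - 16*u^2 + 16*u^4))) ≤ _ := h4
    _ = Gf (14+m) u := by
        simp only [Gf, div_eq_mul_inv, pow_add]
        ring

lemma key_const (m : ℕ) {β K u : ℝ} (hβ1 : 1 ≤ β) (hw0 : 0 ≤ 3 - 4*u^2)
    (hwβ : 3 - 4*u^2 ≤ β) (hK0 : 0 ≤ K)
    (hK : 2 * ((3 - 4*u^2)^14 * (-(u^2*(1 - 16*u^2 + 16*u^4)))) ≤ K)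
    (hinv2 : (Real.sqrt (1 - u^2))⁻¹ ≤ 2) (hu : u^2 < 1) :
    -(β^m * K) ≤ Gf (14+m) u := by
  have hβm : (1:ℝ) ≤ β^m := one_le_pow₀ hβ1
  rcases le_or_gt 0 (u^2*(1 - 16*u^2 + 16*u^4)) with hN|hN
  · have hg : 0 ≤ Gf (14+m) u := by
      unfold Gf
      have := Real.sqrt_nonneg (1 - u^2)
      have h0 : 0 ≤ (3 - 4*u^2)^(14+m) := pow_nonneg hw0 _
      positivity
    nlinarith
  · have h := key_neg (β := β) (c := 2) m hw0 hwβ hN.le hinv2 hu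
    have h5 : -(β^m * K) ≤ (β^m * 2) * ((3 - 4*u^2)^14 * (u^2*(1 - 16*u^2 + 16*u^4))) := by
      have hb0 : (0:ℝ) ≤ β^m := by linarith
      nlinarith [mul_le_mul_of_nonneg_left hK hb0]
    linarith

lemma R_nonpos {u : ℝ} (h1 : 0.26 ≤ u) (h2 : u^2 ≤ 0.75) :
    1 - 16*u^2 + 16*u^4 ≤ 0 := by
  nlinarith [mul_nonneg (by nlinarith : (0:ℝ) ≤ u^2 - 0.0675) (by nlinarith : (0:ℝ) ≤ 0.932 - u^2)]

lemma R_nonneg {u : ℝ} (h2 : u^2 ≤ 0.06697744) : 0 ≤ 1 - 16*u^2 + 16*u^4 := by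
  nlinarith [sq_nonneg (u^2 - 0.06697744), sq_nonneg u]

set_option maxHeartbeats 1000000 in
lemma piece_pos (m : ℕ) :
    (2.73209024:ℝ)^m * (Phi 0.2588 - Phi 0) ≤ ∫ u in (0:ℝ)..(0.2588:ℝ), Gf (14+m) u := by
  have key : ∀ u ∈ Set.Icc (0:ℝ) 0.2588,
      (2.73209024:ℝ)^m * ((3 - 4*u^2)^14 * (u^2*(1 - 16*u^2 + 16*u^4))) ≤ Gf (14+m) u := by
    intro u hu
    have husq : u^2 ≤ 0.06697744 := by
      nlinarith [mul_nonneg (by linarith [hu.2] : (0:ℝ) ≤ 0.2588 - u)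
        (by linarith [hu.1] : (0:ℝ) ≤ 0.2588 + u)]
    exact key_pos m (by norm_num) (by linarith)
      (mul_nonneg (sq_nonneg u) (R_nonneg husq)) (by linarith)
  have hmono := intervalIntegral.integral_mono_on (by norm_num)
    (Continuous.intervalIntegrable (by fun_prop) _ _)
    (Gf_intble _ (by norm_num) (by norm_num) (by norm_num)) key
  calc (2.73209024:ℝ)^m * (Phi 0.2588 - Phi 0)
      = ∫ u in (0:ℝ)..(0.2588:ℝ), (2.73209024:ℝ)^m * ((3 - 4*u^2)^14 * (u^2*(1 - 16*u^2 + 16*u^4))) := by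
        rw [intervalIntegral.integral_const_mul, integral_P]
    _ ≤ _ := hmono

set_option maxHeartbeats 1000000 in
lemma piece_mixed (m : ℕ) :
    (2.73209024:ℝ)^m * (0.0012 * (-16000)) ≤ ∫ u in (0.2588:ℝ)..(0.26:ℝ), Gf (14+m) u := by
  have key : ∀ u ∈ Set.Icc (0.2588:ℝ) 0.26, -((2.73209024:ℝ)^m * 16000) ≤ Gf (14+m) u := by
    intro u hu
    have husq : u^2 ≤ 0.0676 := by
      nlinarith [mul_nonneg (by linarith [hu.2] : (0:ℝ) ≤ 0.26 - u)
        (by linarith [hu.1] : (0:ℝ) ≤ 0.26 + u)]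
    have husqge : 0.06697744 ≤ u^2 := by
      nlinarith [mul_nonneg (by linarith [hu.1] : (0:ℝ) ≤ u - 0.2588)
        (by linarith [hu.1] : (0:ℝ) ≤ u + 0.2588)]
    have hw0 : (0:ℝ) ≤ 3 - 4*u^2 := by linarith
    apply key_const m (by norm_num) hw0 (by linarith) (by norm_num) ?_ ?_ (by linarith)
    · -- 2 * ((3-4u^2)^14 * (-(u^2 * R))) ≤ 16000
      have hw14 : (3 - 4*u^2)^14 ≤ (2.7321:ℝ)^14 :=
        pow_le_pow_left₀ hw0 (by linarith) 14
      have hRlb : -(1 - 16*u^2 + 16*u^4) ≤ 0.0816 := by nlinarith [sq_nonneg (u^2)]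
      have hNb : -(u^2*(1 - 16*u^2 + 16*u^4)) ≤ 0.00577 := by
        have hRub : (1 - 16*u^2 + 16*u^4) ≤ 0.0015 := by
          nlinarith [mul_nonneg (by linarith : (0:ℝ) ≤ 0.0676 - u^2) (sq_nonneg u)]
        nlinarith [mul_nonneg (by linarith : (0:ℝ) ≤ 0.0676 - u^2)
          (by linarith : (0:ℝ) ≤ 0.0816 + (1 - 16*u^2 + 16*u^4)), sq_nonneg u]
      have hprod : (3 - 4*u^2)^14 * (-(u^2*(1 - 16*u^2 + 16*u^4))) ≤ (2.7321:ℝ)^14 * 0.00577 := by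
        nlinarith [mul_nonneg (pow_nonneg hw0 14)
          (by linarith : (0:ℝ) ≤ 0.00577 + u^2*(1 - 16*u^2 + 16*u^4)), hw14,
          pow_nonneg hw0 14]
      nlinarith [hprod]
    · have h12 := inv_sqrt_le (u := u) (q := 1/2) (by norm_num) (by nlinarith)
      calc (Real.sqrt (1 - u^2))⁻¹ ≤ ((1:ℝ)/2)⁻¹ := h12
        _ ≤ 2 := by norm_num
  have hmono := intervalIntegral.integral_mono_on (by norm_num)
    (Continuous.intervalIntegrable (by fun_prop) _ _)
    (Gf_intble _ (by norm_num) (by norm_num) (by norm_num)) key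
  calc (2.73209024:ℝ)^m * (0.0012 * (-16000))
      = ∫ _u in (0.2588:ℝ)..(0.26:ℝ), -((2.73209024:ℝ)^m * 16000) := by
        rw [intervalIntegral.integral_const, smul_eq_mul]
        norm_num
        ring
    _ ≤ _ := hmono

set_option maxHeartbeats 1000000 in
lemma piece_neg (m : ℕ) {a b c q : ℝ} (ha : 0.26 ≤ a) (hab : a ≤ b) (hb : b ≤ 0.866)
    (hq : 0 < q) (hq2 : q^2 + b^2 ≤ 1) (hqc : q⁻¹ ≤ c) :
    (2.73209024:ℝ)^m * (c * (Phi b - Phi a)) ≤ ∫ u in a..b, Gf (14+m) u := by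
  have key : ∀ u ∈ Set.Icc a b,
      ((2.73209024:ℝ)^m * c) * ((3 - 4*u^2)^14 * (u^2*(1 - 16*u^2 + 16*u^4))) ≤ Gf (14+m) u := by
    intro u hu
    have hu0 : (0:ℝ) ≤ u := by linarith [hu.1]
    have husqge : 0.0676 ≤ u^2 := by
      nlinarith [mul_nonneg (by linarith [hu.1] : (0:ℝ) ≤ u - 0.26)
        (by linarith [hu.1] : (0:ℝ) ≤ u + 0.26)]
    have husqb : u^2 ≤ b^2 := by
      nlinarith [mul_nonneg (by linarith [hu.2] : (0:ℝ) ≤ b - u)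
        (by linarith [hu.2] : (0:ℝ) ≤ b + u)]
    have hb75 : b^2 ≤ 0.75 := by
      nlinarith [mul_nonneg (by linarith : (0:ℝ) ≤ 0.866 - b) (by linarith : (0:ℝ) ≤ 0.866 + b)]
    have hw0 : (0:ℝ) ≤ 3 - 4*u^2 := by linarith
    have hR : 1 - 16*u^2 + 16*u^4 ≤ 0 := R_nonpos (by linarith [hu.1]) (by linarith)
    have hN : u^2*(1 - 16*u^2 + 16*u^4) ≤ 0 := by
      nlinarith [mul_nonneg (sq_nonneg u) (by linarith : (0:ℝ) ≤ -(1 - 16*u^2 + 16*u^4))]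
    apply key_neg m hw0 (by linarith) hN ?_ (by linarith)
    have h1 := inv_sqrt_le (u := u) hq (by linarith)
    linarith
  have hmono := intervalIntegral.integral_mono_on hab
    (Continuous.intervalIntegrable (by fun_prop) _ _)
    (Gf_intble _ (by linarith) hab (by linarith)) key
  calc (2.73209024:ℝ)^m * (c * (Phi b - Phi a))
      = ∫ u in a..b, ((2.73209024:ℝ)^m * c) * ((3 - 4*u^2)^14 * (u^2*(1 - 16*u^2 + 16*u^4))) := by
        rw [intervalIntegral.integral_const_mul, integral_P]
        ring
    _ ≤ _ := hmono

set_option maxHeartbeats 1000000 in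
lemma piece_tail (m : ℕ) :
    (2.73209024:ℝ)^m * ((Real.sqrt 3 / 2 - 0.866) * (-1))
      ≤ ∫ u in (0.866:ℝ)..(Real.sqrt 3 / 2), Gf (14+m) u := by
  have hsq3 : Real.sqrt 3 ^ 2 = 3 := Real.sq_sqrt (by norm_num)
  have h866 : (0.866:ℝ) ≤ Real.sqrt 3 / 2 := by
    have : (1.732:ℝ) ≤ Real.sqrt 3 := (Real.le_sqrt (by norm_num) (by norm_num)).mpr (by norm_num)
    linarith
  have h174 : Real.sqrt 3 ≤ 1.74 := by
    rw [show (1.74:ℝ) = Real.sqrt (1.74^2) from (Real.sqrt_sq (by norm_num)).symm]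
    exact Real.sqrt_le_sqrt (by norm_num)
  have key : ∀ u ∈ Set.Icc (0.866:ℝ) (Real.sqrt 3 / 2), -((2.73209024:ℝ)^m * 1) ≤ Gf (14+m) u := by
    intro u hu
    have hu2 : u^2 ≤ 3/4 := by nlinarith [hu.1, hu.2, Real.sqrt_nonneg 3, hsq3]
    have husqge : 0.749956 ≤ u^2 := by
      nlinarith [mul_nonneg (by linarith [hu.1] : (0:ℝ) ≤ u - 0.866)
        (by linarith [hu.1] : (0:ℝ) ≤ u + 0.866)]
    have hw0 : (0:ℝ) ≤ 3 - 4*u^2 := by linarith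
    apply key_const m (by norm_num) hw0 (by linarith) (by norm_num) ?_ ?_ (by linarith)
    · have hw14 : (3 - 4*u^2)^14 ≤ (0.0002:ℝ)^14 := pow_le_pow_left₀ hw0 (by linarith) 14
      have ht2 : u^2*u^2 ≤ 0.5625 := by
        nlinarith [mul_nonneg (by linarith : (0:ℝ) ≤ 0.75 - u^2) (sq_nonneg u)]
      have hNb : -(u^2*(1 - 16*u^2 + 16*u^4)) ≤ 15 := by
        nlinarith [sq_nonneg u, mul_nonneg (mul_nonneg (sq_nonneg u) (sq_nonneg u)) (sq_nonneg u)]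
      have hprod : (3 - 4*u^2)^14 * (-(u^2*(1 - 16*u^2 + 16*u^4))) ≤ (0.0002:ℝ)^14 * 15 := by
        nlinarith [mul_nonneg (pow_nonneg hw0 14)
          (by linarith : (0:ℝ) ≤ 15 + u^2*(1 - 16*u^2 + 16*u^4)), hw14, pow_nonneg hw0 14]
      nlinarith [hprod]
    · have h12 := inv_sqrt_le (u := u) (q := 1/2) (by norm_num) (by nlinarith)
      calc (Real.sqrt (1 - u^2))⁻¹ ≤ ((1:ℝ)/2)⁻¹ := h12
        _ ≤ 2 := by norm_num
  have hmono := intervalIntegral.integral_mono_on h866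
    (Continuous.intervalIntegrable (by fun_prop) _ _)
    (Gf_intble _ (by norm_num) h866 (by linarith)) key
  calc (2.73209024:ℝ)^m * ((Real.sqrt 3 / 2 - 0.866) * (-1))
      = ∫ _u in (0.866:ℝ)..(Real.sqrt 3 / 2), -((2.73209024:ℝ)^m * 1) := by
        rw [intervalIntegral.integral_const, smul_eq_mul]
        ring
    _ ≤ _ := hmono

set_option maxHeartbeats 2000000 in
lemma PhiV0 : Phi 0 = (0 : ℝ) := by
  norm_num [Phi]

set_option maxHeartbeats 2000000 in
lemma PhiV1 : Phi 0.2588 = ((988860864298601968172731856866215217943024750817412933354975633959716472316749977801748145684141181053934680792157982181649 : ℝ)/152129163264924618911435064907343565649300992648207397905935067683458328247070312500000000000000000000000000000000000000) := by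
  norm_num [Phi]

set_option maxHeartbeats 2000000 in
lemma PhiV2 : Phi 0.26 = ((5515380431003511964319762292413187315892311716279872046657536 : ℝ)/848558157130773794973865875590490759350359439849853515625) := by
  norm_num [Phi]

set_option maxHeartbeats 2000000 in
lemma PhiV3 : Phi 0.29 = ((349861972609990654668724568370599631107284499565474217554511762568237453 : ℝ)/56301697622984647750854492187500000000000000000000000000000000000000) := by
  norm_num [Phi]

set_option maxHeartbeats 2000000 in
lemma PhiV4 : Phi 0.32 = ((358733694258660743223688507438590164713704669923675364197674496 : ℝ)/65338978099069582212987672420467788469977676868438720703125) := by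
  norm_num [Phi]

set_option maxHeartbeats 2000000 in
lemma PhiV5 : Phi 0.35 = ((3975640331451969426840978418165743202191219074407 : ℝ)/881584572000000000000000000000000000000000000) := by
  norm_num [Phi]

set_option maxHeartbeats 2000000 in
lemma PhiV6 : Phi 0.38 = ((11926350654322697208166735841208230674957972395448524875657216 : ℝ)/3438893584161556958578298548445673077367246150970458984375) := by
  norm_num [Phi]

set_option maxHeartbeats 2000000 in
lemma PhiV7 : Phi 0.41 = ((45363596729598921063452460626474368539991622668456754250248908864695397343 : ℝ)/17960241541732102632522583007812500000000000000000000000000000000000000) := by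
  norm_num [Phi]

set_option maxHeartbeats 2000000 in
lemma PhiV8 : Phi 0.44 = ((1508705063602717989207010837102758735960539234051382003768289 : ℝ)/848558157130773794973865875590490759350359439849853515625) := by
  norm_num [Phi]

set_option maxHeartbeats 2000000 in
lemma PhiV9 : Phi 0.47 = ((3211769460996700223278940055202287523813144709195028387207965770632467807 : ℝ)/2565748791676014661788940429687500000000000000000000000000000000000000) := by
  norm_num [Phi]

set_option maxHeartbeats 2000000 in
lemma PhiV10 : Phi 0.5 = ((35603500969984 : ℝ)/38569325025) := by
  norm_num [Phi]

set_option maxHeartbeats 2000000 in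
lemma PhiV11 : Phi 0.56 = ((6106253082405369702072548093665682005943247505486928059376696 : ℝ)/9334139728438511744712524631495398352853953838348388671875) := by
  norm_num [Phi]

set_option maxHeartbeats 2000000 in
lemma PhiV12 : Phi 0.62 = ((115951377863821228473264569230446034081832911946206064889856 : ℝ)/191609906448884405316679391262368881143629550933837890625) := by
  norm_num [Phi]

set_option maxHeartbeats 2000000 in
lemma PhiV13 : Phi 0.7 = ((175121467472070114095106099890212864 : ℝ)/291562362690456211566925048828125) := by
  norm_num [Phi]

set_option maxHeartbeats 2000000 in
lemma PhiV14 : Phi 0.866 = ((31394034063801372590757623965244726487996491649377361159893310634237781384416290284523243185602951 : ℝ)/52271182479255665770390137936374230775982141494750976562500000000000000000000000000000000000000) := by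
  norm_num [Phi]

set_option maxHeartbeats 4000000 in
open Real in
/-- For every integer `μ ≥ 14`,
`∫₀^{π/3} (sin 3θ / sin θ)^μ · (sin 5θ · sin θ − sin² 2θ) dθ > π/4`. -/
theorem integral_a_two_lower_bound (μ : ℕ) (hμ : 14 ≤ μ) :
    π / 4 < ∫ θ in (0:ℝ)..(π / 3),
      (sin (3 * θ) / sin θ) ^ μ * (sin (5 * θ) * sin θ - (sin (2 * θ)) ^ 2) := by
  obtain ⟨m, rfl⟩ := Nat.exists_eq_add_of_le hμ
  have hπ := Real.pi_pos
  have hple : (0:ℝ) ≤ π/3 := by positivity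
  have h174 : Real.sqrt 3 ≤ 1.74 := by
    rw [show (1.74:ℝ) = Real.sqrt (1.74^2) from (Real.sqrt_sq (by norm_num)).symm]
    exact Real.sqrt_le_sqrt (by norm_num)
  have h866 : (0.866:ℝ) ≤ Real.sqrt 3 / 2 := by
    have : (1.732:ℝ) ≤ Real.sqrt 3 := (Real.le_sqrt (by norm_num) (by norm_num)).mpr (by norm_num)
    linarith
  have h17321 : Real.sqrt 3 < 1.7321 := by
    rw [show (1.7321:ℝ) = Real.sqrt (1.7321^2) from (Real.sqrt_sq (by norm_num)).symm]
    exact Real.sqrt_lt_sqrt (by norm_num) (by norm_num)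
  have hs87 : Real.sqrt 3 / 2 ≤ 0.87 := by linarith
  have hEq : Set.EqOn (fun θ => (sin (3 * θ) / sin θ) ^ (14+m) * (sin (5 * θ) * sin θ - (sin (2 * θ)) ^ 2))
      (fun θ => cos θ • ((Gf (14+m)) ∘ sin) θ) (Set.uIcc 0 (π/3)) := by
    intro θ hθ
    rw [Set.uIcc_of_le hple] at hθ
    have hc : 0 < cos θ := Real.cos_pos_of_mem_Ioo ⟨by linarith [hθ.1], by linarith [hθ.2]⟩
    have hs2 : Real.sqrt (1 - sin θ^2) = cos θ := by
      rw [show 1 - sin θ^2 = cos θ^2 from by nlinarith [Real.sin_sq_add_cos_sq θ],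
        Real.sqrt_sq hc.le]
    simp only [Function.comp, Gf, smul_eq_mul]
    rw [hs2, mul_comm (cos θ), div_mul_cancel₀ _ hc.ne']
    have h2 : sin (5*θ) * sin θ - (sin (2*θ))^2 = sin θ^2*(1 - 16*sin θ^2 + 16*sin θ^4) := by
      rw [show (5:ℝ)*θ = 2*θ + 3*θ by ring, Real.sin_add, Real.sin_two_mul,
        Real.cos_two_mul, Real.sin_three_mul, Real.cos_three_mul]
      linear_combination (8*Real.sin θ^2*Real.cos θ^2 - 16*Real.sin θ^4 + 4*Real.sin θ^2) * Real.sin_sq_add_cos_sq θ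
    by_cases hs : sin θ = 0
    · rw [h2, hs]
      ring
    · rw [h2, show sin (3*θ)/sin θ = 3 - 4*sin θ^2 from by
        rw [Real.sin_three_mul]; field_simp]
  rw [intervalIntegral.integral_congr hEq]
  have hIm : ContinuousOn (Gf (14+m)) (sin '' Set.uIcc 0 (π/3)) := by
    apply (contOn_Gf _).mono
    rintro y ⟨x, hx, rfl⟩
    rw [Set.uIcc_of_le hple] at hx
    refine ⟨Real.sin_nonneg_of_nonneg_of_le_pi hx.1 (by linarith [hx.2]), ?_⟩
    have hmono := Real.sin_le_sin_of_le_of_le_pi_div_two (by linarith [hx.1] : -(π/2) ≤ x)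
      (by linarith : π/3 ≤ π/2) hx.2
    rw [Real.sin_pi_div_three] at hmono
    linarith
  have hsub := intervalIntegral.integral_comp_smul_deriv' (f := sin) (f' := cos)
    (g := Gf (14+m)) (a := 0) (b := π/3)
    (fun x _ => Real.hasDerivAt_sin x) Real.continuousOn_cos hIm
  rw [hsub, Real.sin_zero, Real.sin_pi_div_three]
  have hsp0 : (∫ u in (0:ℝ)..(Real.sqrt 3 / 2), Gf (14+m) u)
      = (∫ u in (0:ℝ)..(0.2588:ℝ), Gf (14+m) u) + ∫ u in (0.2588:ℝ)..(Real.sqrt 3 / 2), Gf (14+m) u :=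
    (intervalIntegral.integral_add_adjacent_intervals
      (Gf_intble _ (by norm_num) (by norm_num) (by norm_num))
      (Gf_intble _ (by norm_num) (by linarith) (by linarith))).symm
  have hsp1 : (∫ u in (0.2588:ℝ)..(Real.sqrt 3 / 2), Gf (14+m) u)
      = (∫ u in (0.2588:ℝ)..(0.26:ℝ), Gf (14+m) u) + ∫ u in (0.26:ℝ)..(Real.sqrt 3 / 2), Gf (14+m) u :=
    (intervalIntegral.integral_add_adjacent_intervals
      (Gf_intble _ (by norm_num) (by norm_num) (by norm_num))
      (Gf_intble _ (by norm_num) (by linarith) (by linarith))).symm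
  have hsp2 : (∫ u in (0.26:ℝ)..(Real.sqrt 3 / 2), Gf (14+m) u)
      = (∫ u in (0.26:ℝ)..(0.29:ℝ), Gf (14+m) u) + ∫ u in (0.29:ℝ)..(Real.sqrt 3 / 2), Gf (14+m) u :=
    (intervalIntegral.integral_add_adjacent_intervals
      (Gf_intble _ (by norm_num) (by norm_num) (by norm_num))
      (Gf_intble _ (by norm_num) (by linarith) (by linarith))).symm
  have hsp3 : (∫ u in (0.29:ℝ)..(Real.sqrt 3 / 2), Gf (14+m) u)
      = (∫ u in (0.29:ℝ)..(0.32:ℝ), Gf (14+m) u) + ∫ u in (0.32:ℝ)..(Real.sqrt 3 / 2), Gf (14+m) u :=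
    (intervalIntegral.integral_add_adjacent_intervals
      (Gf_intble _ (by norm_num) (by norm_num) (by norm_num))
      (Gf_intble _ (by norm_num) (by linarith) (by linarith))).symm
  have hsp4 : (∫ u in (0.32:ℝ)..(Real.sqrt 3 / 2), Gf (14+m) u)
      = (∫ u in (0.32:ℝ)..(0.35:ℝ), Gf (14+m) u) + ∫ u in (0.35:ℝ)..(Real.sqrt 3 / 2), Gf (14+m) u :=
    (intervalIntegral.integral_add_adjacent_intervals
      (Gf_intble _ (by norm_num) (by norm_num) (by norm_num))
      (Gf_intble _ (by norm_num) (by linarith) (by linarith))).symm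
  have hsp5 : (∫ u in (0.35:ℝ)..(Real.sqrt 3 / 2), Gf (14+m) u)
      = (∫ u in (0.35:ℝ)..(0.38:ℝ), Gf (14+m) u) + ∫ u in (0.38:ℝ)..(Real.sqrt 3 / 2), Gf (14+m) u :=
    (intervalIntegral.integral_add_adjacent_intervals
      (Gf_intble _ (by norm_num) (by norm_num) (by norm_num))
      (Gf_intble _ (by norm_num) (by linarith) (by linarith))).symm
  have hsp6 : (∫ u in (0.38:ℝ)..(Real.sqrt 3 / 2), Gf (14+m) u)
      = (∫ u in (0.38:ℝ)..(0.41:ℝ), Gf (14+m) u) + ∫ u in (0.41:ℝ)..(Real.sqrt 3 / 2), Gf (14+m) u :=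
    (intervalIntegral.integral_add_adjacent_intervals
      (Gf_intble _ (by norm_num) (by norm_num) (by norm_num))
      (Gf_intble _ (by norm_num) (by linarith) (by linarith))).symm
  have hsp7 : (∫ u in (0.41:ℝ)..(Real.sqrt 3 / 2), Gf (14+m) u)
      = (∫ u in (0.41:ℝ)..(0.44:ℝ), Gf (14+m) u) + ∫ u in (0.44:ℝ)..(Real.sqrt 3 / 2), Gf (14+m) u :=
    (intervalIntegral.integral_add_adjacent_intervals
      (Gf_intble _ (by norm_num) (by norm_num) (by norm_num))
      (Gf_intble _ (by norm_num) (by linarith) (by linarith))).symm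
  have hsp8 : (∫ u in (0.44:ℝ)..(Real.sqrt 3 / 2), Gf (14+m) u)
      = (∫ u in (0.44:ℝ)..(0.47:ℝ), Gf (14+m) u) + ∫ u in (0.47:ℝ)..(Real.sqrt 3 / 2), Gf (14+m) u :=
    (intervalIntegral.integral_add_adjacent_intervals
      (Gf_intble _ (by norm_num) (by norm_num) (by norm_num))
      (Gf_intble _ (by norm_num) (by linarith) (by linarith))).symm
  have hsp9 : (∫ u in (0.47:ℝ)..(Real.sqrt 3 / 2), Gf (14+m) u)
      = (∫ u in (0.47:ℝ)..(0.5:ℝ), Gf (14+m) u) + ∫ u in (0.5:ℝ)..(Real.sqrt 3 / 2), Gf (14+m) u :=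
    (intervalIntegral.integral_add_adjacent_intervals
      (Gf_intble _ (by norm_num) (by norm_num) (by norm_num))
      (Gf_intble _ (by norm_num) (by linarith) (by linarith))).symm
  have hsp10 : (∫ u in (0.5:ℝ)..(Real.sqrt 3 / 2), Gf (14+m) u)
      = (∫ u in (0.5:ℝ)..(0.56:ℝ), Gf (14+m) u) + ∫ u in (0.56:ℝ)..(Real.sqrt 3 / 2), Gf (14+m) u :=
    (intervalIntegral.integral_add_adjacent_intervals
      (Gf_intble _ (by norm_num) (by norm_num) (by norm_num))
      (Gf_intble _ (by norm_num) (by linarith) (by linarith))).symm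
  have hsp11 : (∫ u in (0.56:ℝ)..(Real.sqrt 3 / 2), Gf (14+m) u)
      = (∫ u in (0.56:ℝ)..(0.62:ℝ), Gf (14+m) u) + ∫ u in (0.62:ℝ)..(Real.sqrt 3 / 2), Gf (14+m) u :=
    (intervalIntegral.integral_add_adjacent_intervals
      (Gf_intble _ (by norm_num) (by norm_num) (by norm_num))
      (Gf_intble _ (by norm_num) (by linarith) (by linarith))).symm
  have hsp12 : (∫ u in (0.62:ℝ)..(Real.sqrt 3 / 2), Gf (14+m) u)
      = (∫ u in (0.62:ℝ)..(0.7:ℝ), Gf (14+m) u) + ∫ u in (0.7:ℝ)..(Real.sqrt 3 / 2), Gf (14+m) u :=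
    (intervalIntegral.integral_add_adjacent_intervals
      (Gf_intble _ (by norm_num) (by norm_num) (by norm_num))
      (Gf_intble _ (by norm_num) (by linarith) (by linarith))).symm
  have hsp13 : (∫ u in (0.7:ℝ)..(Real.sqrt 3 / 2), Gf (14+m) u)
      = (∫ u in (0.7:ℝ)..(0.866:ℝ), Gf (14+m) u) + ∫ u in (0.866:ℝ)..(Real.sqrt 3 / 2), Gf (14+m) u :=
    (intervalIntegral.integral_add_adjacent_intervals
      (Gf_intble _ (by norm_num) (by norm_num) (by norm_num))
      (Gf_intble _ (by norm_num) (by linarith) (by linarith))).symm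
  rw [hsp0, hsp1, hsp2, hsp3, hsp4, hsp5, hsp6, hsp7, hsp8, hsp9, hsp10, hsp11, hsp12, hsp13]
  have p0 := piece_pos m
  have p1 := piece_mixed m
  have p2 := piece_neg (a := 0.26) (b := 0.29) (c := ((209 : ℝ)/200)) (q := ((200 : ℝ)/209)) m
    (by norm_num) (by norm_num) (by norm_num) (by norm_num) (by norm_num) (by norm_num)
  have p3 := piece_neg (a := 0.29) (b := 0.32) (c := ((132 : ℝ)/125)) (q := ((125 : ℝ)/132)) m
    (by norm_num) (by norm_num) (by norm_num) (by norm_num) (by norm_num) (by norm_num)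
  have p4 := piece_neg (a := 0.32) (b := 0.35) (c := ((267 : ℝ)/250)) (q := ((250 : ℝ)/267)) m
    (by norm_num) (by norm_num) (by norm_num) (by norm_num) (by norm_num) (by norm_num)
  have p5 := piece_neg (a := 0.35) (b := 0.38) (c := ((541 : ℝ)/500)) (q := ((500 : ℝ)/541)) m
    (by norm_num) (by norm_num) (by norm_num) (by norm_num) (by norm_num) (by norm_num)
  have p6 := piece_neg (a := 0.38) (b := 0.41) (c := ((1097 : ℝ)/1000)) (q := ((1000 : ℝ)/1097)) m
    (by norm_num) (by norm_num) (by norm_num) (by norm_num) (by norm_num) (by norm_num)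
  have p7 := piece_neg (a := 0.41) (b := 0.44) (c := ((557 : ℝ)/500)) (q := ((500 : ℝ)/557)) m
    (by norm_num) (by norm_num) (by norm_num) (by norm_num) (by norm_num) (by norm_num)
  have p8 := piece_neg (a := 0.44) (b := 0.47) (c := ((1133 : ℝ)/1000)) (q := ((1000 : ℝ)/1133)) m
    (by norm_num) (by norm_num) (by norm_num) (by norm_num) (by norm_num) (by norm_num)
  have p9 := piece_neg (a := 0.47) (b := 0.5) (c := ((231 : ℝ)/200)) (q := ((200 : ℝ)/231)) m
    (by norm_num) (by norm_num) (by norm_num) (by norm_num) (by norm_num) (by norm_num)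
  have p10 := piece_neg (a := 0.5) (b := 0.56) (c := ((151 : ℝ)/125)) (q := ((125 : ℝ)/151)) m
    (by norm_num) (by norm_num) (by norm_num) (by norm_num) (by norm_num) (by norm_num)
  have p11 := piece_neg (a := 0.56) (b := 0.62) (c := ((51 : ℝ)/40)) (q := ((40 : ℝ)/51)) m
    (by norm_num) (by norm_num) (by norm_num) (by norm_num) (by norm_num) (by norm_num)
  have p12 := piece_neg (a := 0.62) (b := 0.7) (c := ((1401 : ℝ)/1000)) (q := ((1000 : ℝ)/1401)) m
    (by norm_num) (by norm_num) (by norm_num) (by norm_num) (by norm_num) (by norm_num)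
  have p13 := piece_neg (a := 0.7) (b := 0.866) (c := (2 : ℝ)) (q := ((1 : ℝ)/2)) m
    (by norm_num) (by norm_num) (by norm_num) (by norm_num) (by norm_num) (by norm_num)
  have p14 := piece_tail m
  rw [PhiV0, PhiV1] at p0
  rw [PhiV2, PhiV3] at p2
  rw [PhiV3, PhiV4] at p3
  rw [PhiV4, PhiV5] at p4
  rw [PhiV5, PhiV6] at p5
  rw [PhiV6, PhiV7] at p6
  rw [PhiV7, PhiV8] at p7
  rw [PhiV8, PhiV9] at p8
  rw [PhiV9, PhiV10] at p9
  rw [PhiV10, PhiV11] at p10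
  rw [PhiV11, PhiV12] at p11
  rw [PhiV12, PhiV13] at p12
  rw [PhiV13, PhiV14] at p13
  have hBm : (1:ℝ) ≤ (2.73209024:ℝ)^m := one_le_pow₀ (by norm_num)
  have hU0 : (0:ℝ) ≤ (((988860864298601968172731856866215217943024750817412933354975633959716472316749977801748145684141181053934680792157982181649 : ℝ)/152129163264924618911435064907343565649300992648207397905935067683458328247070312500000000000000000000000000000000000000) - 0) + (0.0012 * (-16000)) + (((209 : ℝ)/200) * (((349861972609990654668724568370599631107284499565474217554511762568237453 : ℝ)/56301697622984647750854492187500000000000000000000000000000000000000) - ((5515380431003511964319762292413187315892311716279872046657536 : ℝ)/848558157130773794973865875590490759350359439849853515625))) + (((132 : ℝ)/125) * (((358733694258660743223688507438590164713704669923675364197674496 : ℝ)/65338978099069582212987672420467788469977676868438720703125) - ((349861972609990654668724568370599631107284499565474217554511762568237453 : ℝ)/56301697622984647750854492187500000000000000000000000000000000000000))) + (((267 : ℝ)/250) * (((3975640331451969426840978418165743202191219074407 : ℝ)/881584572000000000000000000000000000000000000) - ((358733694258660743223688507438590164713704669923675364197674496 : ℝ)/65338978099069582212987672420467788469977676868438720703125)))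 + (((541 : ℝ)/500) * (((11926350654322697208166735841208230674957972395448524875657216 : ℝ)/3438893584161556958578298548445673077367246150970458984375) - ((3975640331451969426840978418165743202191219074407 : ℝ)/881584572000000000000000000000000000000000000))) + (((1097 : ℝ)/1000) * (((45363596729598921063452460626474368539991622668456754250248908864695397343 : ℝ)/17960241541732102632522583007812500000000000000000000000000000000000000) - ((11926350654322697208166735841208230674957972395448524875657216 : ℝ)/3438893584161556958578298548445673077367246150970458984375))) + (((557 : ℝ)/500) * (((1508705063602717989207010837102758735960539234051382003768289 : ℝ)/848558157130773794973865875590490759350359439849853515625) - ((45363596729598921063452460626474368539991622668456754250248908864695397343 : ℝ)/17960241541732102632522583007812500000000000000000000000000000000000000))) + (((1133 : ℝ)/1000) * (((3211769460996700223278940055202287523813144709195028387207965770632467807 : ℝ)/2565748791676014661788940429687500000000000000000000000000000000000000) - ((1508705063602717989207010837102758735960539234051382003768289 : ℝ)/848558157130773794973865875590490759350359439849853515625))) + (((231 : ℝ)/200) * (((35603500969984 : ℝ)/38569325025) - ((3211769460996700223278940055202287523813144709195028387207965770632467807 : ℝ)/2565748791676014661788940429687500000000000000000000000000000000000000))) +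 (((151 : ℝ)/125) * (((6106253082405369702072548093665682005943247505486928059376696 : ℝ)/9334139728438511744712524631495398352853953838348388671875) - ((35603500969984 : ℝ)/38569325025))) + (((51 : ℝ)/40) * (((115951377863821228473264569230446034081832911946206064889856 : ℝ)/191609906448884405316679391262368881143629550933837890625) - ((6106253082405369702072548093665682005943247505486928059376696 : ℝ)/9334139728438511744712524631495398352853953838348388671875))) + (((1401 : ℝ)/1000) * (((175121467472070114095106099890212864 : ℝ)/291562362690456211566925048828125) - ((115951377863821228473264569230446034081832911946206064889856 : ℝ)/191609906448884405316679391262368881143629550933837890625))) + ((2 : ℝ) * (((31394034063801372590757623965244726487996491649377361159893310634237781384416290284523243185602951 : ℝ)/52271182479255665770390137936374230775982141494750976562500000000000000000000000000000000000000) - ((175121467472070114095106099890212864 : ℝ)/291562362690456211566925048828125))) + ((Real.sqrt 3 / 2 - 0.866) * (-1)) := by linarith [h17321, h866]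
  have hU : π/4 < (((988860864298601968172731856866215217943024750817412933354975633959716472316749977801748145684141181053934680792157982181649 : ℝ)/152129163264924618911435064907343565649300992648207397905935067683458328247070312500000000000000000000000000000000000000) - 0) + (0.0012 * (-16000)) + (((209 : ℝ)/200) * (((349861972609990654668724568370599631107284499565474217554511762568237453 : ℝ)/56301697622984647750854492187500000000000000000000000000000000000000) - ((5515380431003511964319762292413187315892311716279872046657536 : ℝ)/848558157130773794973865875590490759350359439849853515625))) + (((132 : ℝ)/125) * (((358733694258660743223688507438590164713704669923675364197674496 : ℝ)/65338978099069582212987672420467788469977676868438720703125) - ((349861972609990654668724568370599631107284499565474217554511762568237453 : ℝ)/56301697622984647750854492187500000000000000000000000000000000000000))) + (((267 : ℝ)/250) * (((3975640331451969426840978418165743202191219074407 : ℝ)/881584572000000000000000000000000000000000000) - ((358733694258660743223688507438590164713704669923675364197674496 : ℝ)/65338978099069582212987672420467788469977676868438720703125))) + (((541 : ℝ)/500) * (((11926350654322697208166735841208230674957972395448524875657216 : ℝ)/3438893584161556958578298548445673077367246150970458984375) - ((3975640331451969426840978418165743202191219074407 : ℝ)/881584572000000000000000000000000000000000000))) + (((1097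 : ℝ)/1000) * (((45363596729598921063452460626474368539991622668456754250248908864695397343 : ℝ)/17960241541732102632522583007812500000000000000000000000000000000000000) - ((11926350654322697208166735841208230674957972395448524875657216 : ℝ)/3438893584161556958578298548445673077367246150970458984375))) + (((557 : ℝ)/500) * (((1508705063602717989207010837102758735960539234051382003768289 : ℝ)/848558157130773794973865875590490759350359439849853515625) - ((45363596729598921063452460626474368539991622668456754250248908864695397343 : ℝ)/17960241541732102632522583007812500000000000000000000000000000000000000))) + (((1133 : ℝ)/1000) * (((3211769460996700223278940055202287523813144709195028387207965770632467807 : ℝ)/2565748791676014661788940429687500000000000000000000000000000000000000) - ((1508705063602717989207010837102758735960539234051382003768289 : ℝ)/848558157130773794973865875590490759350359439849853515625))) + (((231 : ℝ)/200) * (((35603500969984 : ℝ)/38569325025) - ((3211769460996700223278940055202287523813144709195028387207965770632467807 : ℝ)/2565748791676014661788940429687500000000000000000000000000000000000000))) + (((151 : ℝ)/125) * (((6106253082405369702072548093665682005943247505486928059376696 : ℝ)/9334139728438511744712524631495398352853953838348388671875) - ((35603500969984 : ℝ)/38569325025))) + (((51 : ℝ)/40) * (((115951377863821228473264569230446034081832911946206064889856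 : ℝ)/191609906448884405316679391262368881143629550933837890625) - ((6106253082405369702072548093665682005943247505486928059376696 : ℝ)/9334139728438511744712524631495398352853953838348388671875))) + (((1401 : ℝ)/1000) * (((175121467472070114095106099890212864 : ℝ)/291562362690456211566925048828125) - ((115951377863821228473264569230446034081832911946206064889856 : ℝ)/191609906448884405316679391262368881143629550933837890625))) + ((2 : ℝ) * (((31394034063801372590757623965244726487996491649377361159893310634237781384416290284523243185602951 : ℝ)/52271182479255665770390137936374230775982141494750976562500000000000000000000000000000000000000) - ((175121467472070114095106099890212864 : ℝ)/291562362690456211566925048828125))) + ((Real.sqrt 3 / 2 - 0.866) * (-1)) := by linarith [h17321, h866, Real.pi_lt_d2]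
  have hmul : ((((988860864298601968172731856866215217943024750817412933354975633959716472316749977801748145684141181053934680792157982181649 : ℝ)/152129163264924618911435064907343565649300992648207397905935067683458328247070312500000000000000000000000000000000000000) - 0) + (0.0012 * (-16000)) + (((209 : ℝ)/200) * (((349861972609990654668724568370599631107284499565474217554511762568237453 : ℝ)/56301697622984647750854492187500000000000000000000000000000000000000) - ((5515380431003511964319762292413187315892311716279872046657536 : ℝ)/848558157130773794973865875590490759350359439849853515625))) + (((132 : ℝ)/125) * (((358733694258660743223688507438590164713704669923675364197674496 : ℝ)/65338978099069582212987672420467788469977676868438720703125) - ((349861972609990654668724568370599631107284499565474217554511762568237453 : ℝ)/56301697622984647750854492187500000000000000000000000000000000000000))) + (((267 : ℝ)/250) * (((3975640331451969426840978418165743202191219074407 : ℝ)/881584572000000000000000000000000000000000000) - ((358733694258660743223688507438590164713704669923675364197674496 : ℝ)/65338978099069582212987672420467788469977676868438720703125))) + (((541 : ℝ)/500) * (((11926350654322697208166735841208230674957972395448524875657216 : ℝ)/3438893584161556958578298548445673077367246150970458984375) - ((3975640331451969426840978418165743202191219074407 : ℝ)/881584572000000000000000000000000000000000000))) + (((1097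 : ℝ)/1000) * (((45363596729598921063452460626474368539991622668456754250248908864695397343 : ℝ)/17960241541732102632522583007812500000000000000000000000000000000000000) - ((11926350654322697208166735841208230674957972395448524875657216 : ℝ)/3438893584161556958578298548445673077367246150970458984375))) + (((557 : ℝ)/500) * (((1508705063602717989207010837102758735960539234051382003768289 : ℝ)/848558157130773794973865875590490759350359439849853515625) - ((45363596729598921063452460626474368539991622668456754250248908864695397343 : ℝ)/17960241541732102632522583007812500000000000000000000000000000000000000))) + (((1133 : ℝ)/1000) * (((3211769460996700223278940055202287523813144709195028387207965770632467807 : ℝ)/2565748791676014661788940429687500000000000000000000000000000000000000) - ((1508705063602717989207010837102758735960539234051382003768289 : ℝ)/848558157130773794973865875590490759350359439849853515625))) + (((231 : ℝ)/200) * (((35603500969984 : ℝ)/38569325025) - ((3211769460996700223278940055202287523813144709195028387207965770632467807 : ℝ)/2565748791676014661788940429687500000000000000000000000000000000000000))) + (((151 : ℝ)/125) * (((6106253082405369702072548093665682005943247505486928059376696 : ℝ)/9334139728438511744712524631495398352853953838348388671875) - ((35603500969984 : ℝ)/38569325025))) + (((51 : ℝ)/40) * (((115951377863821228473264569230446034081832911946206064889856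 : ℝ)/191609906448884405316679391262368881143629550933837890625) - ((6106253082405369702072548093665682005943247505486928059376696 : ℝ)/9334139728438511744712524631495398352853953838348388671875))) + (((1401 : ℝ)/1000) * (((175121467472070114095106099890212864 : ℝ)/291562362690456211566925048828125) - ((115951377863821228473264569230446034081832911946206064889856 : ℝ)/191609906448884405316679391262368881143629550933837890625))) + ((2 : ℝ) * (((31394034063801372590757623965244726487996491649377361159893310634237781384416290284523243185602951 : ℝ)/52271182479255665770390137936374230775982141494750976562500000000000000000000000000000000000000) - ((175121467472070114095106099890212864 : ℝ)/291562362690456211566925048828125))) + ((Real.sqrt 3 / 2 - 0.866) * (-1))) ≤ (2.73209024:ℝ)^m * ((((988860864298601968172731856866215217943024750817412933354975633959716472316749977801748145684141181053934680792157982181649 : ℝ)/152129163264924618911435064907343565649300992648207397905935067683458328247070312500000000000000000000000000000000000000) - 0) + (0.0012 * (-16000)) + (((209 : ℝ)/200) * (((349861972609990654668724568370599631107284499565474217554511762568237453 : ℝ)/56301697622984647750854492187500000000000000000000000000000000000000) - ((5515380431003511964319762292413187315892311716279872046657536 : ℝ)/848558157130773794973865875590490759350359439849853515625))) + (((132 :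 ℝ)/125) * (((358733694258660743223688507438590164713704669923675364197674496 : ℝ)/65338978099069582212987672420467788469977676868438720703125) - ((349861972609990654668724568370599631107284499565474217554511762568237453 : ℝ)/56301697622984647750854492187500000000000000000000000000000000000000))) + (((267 : ℝ)/250) * (((3975640331451969426840978418165743202191219074407 : ℝ)/881584572000000000000000000000000000000000000) - ((358733694258660743223688507438590164713704669923675364197674496 : ℝ)/65338978099069582212987672420467788469977676868438720703125))) + (((541 : ℝ)/500) * (((11926350654322697208166735841208230674957972395448524875657216 : ℝ)/3438893584161556958578298548445673077367246150970458984375) - ((3975640331451969426840978418165743202191219074407 : ℝ)/881584572000000000000000000000000000000000000))) + (((1097 : ℝ)/1000) * (((45363596729598921063452460626474368539991622668456754250248908864695397343 : ℝ)/17960241541732102632522583007812500000000000000000000000000000000000000) - ((11926350654322697208166735841208230674957972395448524875657216 : ℝ)/3438893584161556958578298548445673077367246150970458984375))) + (((557 : ℝ)/500) * (((1508705063602717989207010837102758735960539234051382003768289 : ℝ)/848558157130773794973865875590490759350359439849853515625) - ((45363596729598921063452460626474368539991622668456754250248908864695397343 : ℝ)/17960241541732102632522583007812500000000000000000000000000000000000000)))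 + (((1133 : ℝ)/1000) * (((3211769460996700223278940055202287523813144709195028387207965770632467807 : ℝ)/2565748791676014661788940429687500000000000000000000000000000000000000) - ((1508705063602717989207010837102758735960539234051382003768289 : ℝ)/848558157130773794973865875590490759350359439849853515625))) + (((231 : ℝ)/200) * (((35603500969984 : ℝ)/38569325025) - ((3211769460996700223278940055202287523813144709195028387207965770632467807 : ℝ)/2565748791676014661788940429687500000000000000000000000000000000000000))) + (((151 : ℝ)/125) * (((6106253082405369702072548093665682005943247505486928059376696 : ℝ)/9334139728438511744712524631495398352853953838348388671875) - ((35603500969984 : ℝ)/38569325025))) + (((51 : ℝ)/40) * (((115951377863821228473264569230446034081832911946206064889856 : ℝ)/191609906448884405316679391262368881143629550933837890625) - ((6106253082405369702072548093665682005943247505486928059376696 : ℝ)/9334139728438511744712524631495398352853953838348388671875))) + (((1401 : ℝ)/1000) * (((175121467472070114095106099890212864 : ℝ)/291562362690456211566925048828125) - ((115951377863821228473264569230446034081832911946206064889856 : ℝ)/191609906448884405316679391262368881143629550933837890625))) + ((2 : ℝ) * (((31394034063801372590757623965244726487996491649377361159893310634237781384416290284523243185602951 : ℝ)/52271182479255665770390137936374230775982141494750976562500000000000000000000000000000000000000)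 - ((175121467472070114095106099890212864 : ℝ)/291562362690456211566925048828125))) + ((Real.sqrt 3 / 2 - 0.866) * (-1))) := le_mul_of_one_le_left hU0 hBm
  have hexp : (2.73209024:ℝ)^m * ((((988860864298601968172731856866215217943024750817412933354975633959716472316749977801748145684141181053934680792157982181649 : ℝ)/152129163264924618911435064907343565649300992648207397905935067683458328247070312500000000000000000000000000000000000000) - 0) + (0.0012 * (-16000)) + (((209 : ℝ)/200) * (((349861972609990654668724568370599631107284499565474217554511762568237453 : ℝ)/56301697622984647750854492187500000000000000000000000000000000000000) - ((5515380431003511964319762292413187315892311716279872046657536 : ℝ)/848558157130773794973865875590490759350359439849853515625))) + (((132 : ℝ)/125) * (((358733694258660743223688507438590164713704669923675364197674496 : ℝ)/65338978099069582212987672420467788469977676868438720703125) - ((349861972609990654668724568370599631107284499565474217554511762568237453 : ℝ)/56301697622984647750854492187500000000000000000000000000000000000000))) + (((267 : ℝ)/250) * (((3975640331451969426840978418165743202191219074407 : ℝ)/881584572000000000000000000000000000000000000) - ((358733694258660743223688507438590164713704669923675364197674496 : ℝ)/65338978099069582212987672420467788469977676868438720703125))) + (((541 : ℝ)/500) * (((11926350654322697208166735841208230674957972395448524875657216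 : ℝ)/3438893584161556958578298548445673077367246150970458984375) - ((3975640331451969426840978418165743202191219074407 : ℝ)/881584572000000000000000000000000000000000000))) + (((1097 : ℝ)/1000) * (((45363596729598921063452460626474368539991622668456754250248908864695397343 : ℝ)/17960241541732102632522583007812500000000000000000000000000000000000000) - ((11926350654322697208166735841208230674957972395448524875657216 : ℝ)/3438893584161556958578298548445673077367246150970458984375))) + (((557 : ℝ)/500) * (((1508705063602717989207010837102758735960539234051382003768289 : ℝ)/848558157130773794973865875590490759350359439849853515625) - ((45363596729598921063452460626474368539991622668456754250248908864695397343 : ℝ)/17960241541732102632522583007812500000000000000000000000000000000000000))) + (((1133 : ℝ)/1000) * (((3211769460996700223278940055202287523813144709195028387207965770632467807 : ℝ)/2565748791676014661788940429687500000000000000000000000000000000000000) - ((1508705063602717989207010837102758735960539234051382003768289 : ℝ)/848558157130773794973865875590490759350359439849853515625))) + (((231 : ℝ)/200) * (((35603500969984 : ℝ)/38569325025) - ((3211769460996700223278940055202287523813144709195028387207965770632467807 : ℝ)/2565748791676014661788940429687500000000000000000000000000000000000000))) + (((151 : ℝ)/125) * (((6106253082405369702072548093665682005943247505486928059376696 :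 ℝ)/9334139728438511744712524631495398352853953838348388671875) - ((35603500969984 : ℝ)/38569325025))) + (((51 : ℝ)/40) * (((115951377863821228473264569230446034081832911946206064889856 : ℝ)/191609906448884405316679391262368881143629550933837890625) - ((6106253082405369702072548093665682005943247505486928059376696 : ℝ)/9334139728438511744712524631495398352853953838348388671875))) + (((1401 : ℝ)/1000) * (((175121467472070114095106099890212864 : ℝ)/291562362690456211566925048828125) - ((115951377863821228473264569230446034081832911946206064889856 : ℝ)/191609906448884405316679391262368881143629550933837890625))) + ((2 : ℝ) * (((31394034063801372590757623965244726487996491649377361159893310634237781384416290284523243185602951 : ℝ)/52271182479255665770390137936374230775982141494750976562500000000000000000000000000000000000000) - ((175121467472070114095106099890212864 : ℝ)/291562362690456211566925048828125))) + ((Real.sqrt 3 / 2 - 0.866) * (-1))) = (2.73209024:ℝ)^m * (((988860864298601968172731856866215217943024750817412933354975633959716472316749977801748145684141181053934680792157982181649 : ℝ)/152129163264924618911435064907343565649300992648207397905935067683458328247070312500000000000000000000000000000000000000) - 0) + (2.73209024:ℝ)^m * (0.0012 * (-16000)) + (2.73209024:ℝ)^m * (((209 : ℝ)/200) * (((349861972609990654668724568370599631107284499565474217554511762568237453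 : ℝ)/56301697622984647750854492187500000000000000000000000000000000000000) - ((5515380431003511964319762292413187315892311716279872046657536 : ℝ)/848558157130773794973865875590490759350359439849853515625))) + (2.73209024:ℝ)^m * (((132 : ℝ)/125) * (((358733694258660743223688507438590164713704669923675364197674496 : ℝ)/65338978099069582212987672420467788469977676868438720703125) - ((349861972609990654668724568370599631107284499565474217554511762568237453 : ℝ)/56301697622984647750854492187500000000000000000000000000000000000000))) + (2.73209024:ℝ)^m * (((267 : ℝ)/250) * (((3975640331451969426840978418165743202191219074407 : ℝ)/881584572000000000000000000000000000000000000) - ((358733694258660743223688507438590164713704669923675364197674496 : ℝ)/65338978099069582212987672420467788469977676868438720703125))) + (2.73209024:ℝ)^m * (((541 : ℝ)/500) * (((11926350654322697208166735841208230674957972395448524875657216 : ℝ)/3438893584161556958578298548445673077367246150970458984375) - ((3975640331451969426840978418165743202191219074407 : ℝ)/881584572000000000000000000000000000000000000))) + (2.73209024:ℝ)^m * (((1097 : ℝ)/1000) * (((45363596729598921063452460626474368539991622668456754250248908864695397343 : ℝ)/17960241541732102632522583007812500000000000000000000000000000000000000) - ((11926350654322697208166735841208230674957972395448524875657216 : ℝ)/3438893584161556958578298548445673077367246150970458984375)))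 + (2.73209024:ℝ)^m * (((557 : ℝ)/500) * (((1508705063602717989207010837102758735960539234051382003768289 : ℝ)/848558157130773794973865875590490759350359439849853515625) - ((45363596729598921063452460626474368539991622668456754250248908864695397343 : ℝ)/17960241541732102632522583007812500000000000000000000000000000000000000))) + (2.73209024:ℝ)^m * (((1133 : ℝ)/1000) * (((3211769460996700223278940055202287523813144709195028387207965770632467807 : ℝ)/2565748791676014661788940429687500000000000000000000000000000000000000) - ((1508705063602717989207010837102758735960539234051382003768289 : ℝ)/848558157130773794973865875590490759350359439849853515625))) + (2.73209024:ℝ)^m * (((231 : ℝ)/200) * (((35603500969984 : ℝ)/38569325025) - ((3211769460996700223278940055202287523813144709195028387207965770632467807 : ℝ)/2565748791676014661788940429687500000000000000000000000000000000000000))) + (2.73209024:ℝ)^m * (((151 : ℝ)/125) * (((6106253082405369702072548093665682005943247505486928059376696 : ℝ)/9334139728438511744712524631495398352853953838348388671875) - ((35603500969984 : ℝ)/38569325025))) + (2.73209024:ℝ)^m * (((51 : ℝ)/40) * (((115951377863821228473264569230446034081832911946206064889856 : ℝ)/191609906448884405316679391262368881143629550933837890625) - ((6106253082405369702072548093665682005943247505486928059376696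 : ℝ)/9334139728438511744712524631495398352853953838348388671875))) + (2.73209024:ℝ)^m * (((1401 : ℝ)/1000) * (((175121467472070114095106099890212864 : ℝ)/291562362690456211566925048828125) - ((115951377863821228473264569230446034081832911946206064889856 : ℝ)/191609906448884405316679391262368881143629550933837890625))) + (2.73209024:ℝ)^m * ((2 : ℝ) * (((31394034063801372590757623965244726487996491649377361159893310634237781384416290284523243185602951 : ℝ)/52271182479255665770390137936374230775982141494750976562500000000000000000000000000000000000000) - ((175121467472070114095106099890212864 : ℝ)/291562362690456211566925048828125))) + (2.73209024:ℝ)^m * ((Real.sqrt 3 / 2 - 0.866) * (-1)) := by ring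
  linarith [p0, p1, p2, p3, p4, p5, p6, p7, p8, p9, p10, p11, p12, p13, p14, hU, hmul, hexp.le, hexp.ge]
end

section
/- Let a ≥ 3 be an integer. For every θ ∈ (0, π/(a+1)] one has λ_a(θ) = sin((a+1)θ)/sin θ ≥ 0, and for every θ ∈ [0, π/(a+1)] one has F_a(θ) = 1 − 2cos(2aθ) + cos(2(a+1)θ) ≥ 0. -/
open Real in
private lemma trig_identity (A t : ℝ) :
    1 - 2 * cos (2 * A) + cos (2 * (A + t)) =
      2 * (sin (A + t) * sin (A - t) - 2 * sin t * sin A * cos (A + t)) := by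
  rw [Real.cos_two_mul, Real.cos_two_mul]
  simp only [Real.cos_add, Real.sin_add, Real.sin_sub]
  linear_combination (2 * cos A ^ 2 - 2 * sin A ^ 2) * Real.sin_sq_add_cos_sq t -
    2 * Real.sin_sq_add_cos_sq A

open Real in
/-- For an integer `a ≥ 3`: on `(0, π/(a+1)]` one has `λ_a(θ) = sin((a+1)θ)/sin θ ≥ 0`,
and on `[0, π/(a+1)]` one has `F_a(θ) = 1 − 2cos(2aθ) + cos(2(a+1)θ) ≥ 0`. -/
theorem lambda_F_nonneg (a : ℕ) (ha : 3 ≤ a) :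
    (∀ θ : ℝ, 0 < θ → θ ≤ π / ((a : ℝ) + 1) →
      0 ≤ sin (((a : ℝ) + 1) * θ) / sin θ) ∧
    (∀ θ : ℝ, 0 ≤ θ → θ ≤ π / ((a : ℝ) + 1) →
      0 ≤ 1 - 2 * cos (2 * (a : ℝ) * θ) + cos (2 * ((a : ℝ) + 1) * θ)) := by
  have hπ := Real.pi_pos
  have ha1 : (3 : ℝ) ≤ (a : ℝ) := by exact_mod_cast ha
  have hA : (0 : ℝ) < (a : ℝ) + 1 := by linarith
  constructor
  · intro θ hθ hθ'
    have h1 : ((a : ℝ) + 1) * θ ≤ π := by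
      have := (le_div_iff₀ hA).mp hθ'
      linarith [this]
    apply div_nonneg
    · exact Real.sin_nonneg_of_nonneg_of_le_pi (by positivity) h1
    · have hθπ : θ < π := lt_of_le_of_lt hθ' (div_lt_self hπ (by linarith))
      exact le_of_lt (Real.sin_pos_of_pos_of_lt_pi hθ hθπ)
  · intro θ hθ hθ'
    have hθπtot : ((a : ℝ) + 1) * θ ≤ π := by
      have := (le_div_iff₀ hA).mp hθ'
      linarith [this]
    -- linear facts relating the angles
    have L1 : 3 * θ ≤ (a : ℝ) * θ := mul_le_mul_of_nonneg_right ha1 hθ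
    have L2 : (a : ℝ) * θ ≤ ((a : ℝ) + 1) * θ :=
      mul_le_mul_of_nonneg_right (by linarith) hθ
    have L3 : 0 ≤ ((a : ℝ) - 1) * θ := mul_nonneg (by linarith) hθ
    have L4 : ((a : ℝ) - 1) * θ ≤ ((a : ℝ) + 1) * θ :=
      mul_le_mul_of_nonneg_right (by linarith) hθ
    have L5 : 0 ≤ (a : ℝ) * θ := mul_nonneg (by linarith) hθ
    have L6 : (0 : ℝ) ≤ 3 * θ := by linarith
    have L7 : θ ≤ ((a : ℝ) + 1) * θ := le_mul_of_one_le_left hθ (by linarith)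
    have key : 1 - 2 * cos (2 * (a : ℝ) * θ) + cos (2 * ((a : ℝ) + 1) * θ) =
        2 * (sin (((a : ℝ) + 1) * θ) * sin (((a : ℝ) - 1) * θ) -
          2 * sin θ * sin ((a : ℝ) * θ) * cos (((a : ℝ) + 1) * θ)) := by
      have h := trig_identity ((a : ℝ) * θ) θ
      rw [show 2 * (a : ℝ) * θ = 2 * ((a : ℝ) * θ) by ring,
        show 2 * ((a : ℝ) + 1) * θ = 2 * ((a : ℝ) * θ + θ) by ring,
        show ((a : ℝ) + 1) * θ = (a : ℝ) * θ + θ by ring,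
        show ((a : ℝ) - 1) * θ = (a : ℝ) * θ - θ by ring]
      exact h
    rw [key]
    have s1 : 0 ≤ sin (((a : ℝ) + 1) * θ) :=
      Real.sin_nonneg_of_nonneg_of_le_pi (by linarith) hθπtot
    have s2 : 0 ≤ sin (((a : ℝ) - 1) * θ) :=
      Real.sin_nonneg_of_nonneg_of_le_pi L3 (by linarith)
    have s3 : 0 ≤ sin ((a : ℝ) * θ) :=
      Real.sin_nonneg_of_nonneg_of_le_pi L5 (by linarith)
    have s4 : 0 ≤ sin θ := Real.sin_nonneg_of_nonneg_of_le_pi hθ (by linarith)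
    rcases le_or_gt (((a : ℝ) + 1) * θ) (π / 2) with hc | hc
    · -- small angle case: (a+1)θ ≤ π/2
      have e1 : sin (((a : ℝ) + 2) * θ) - sin ((a : ℝ) * θ) =
          2 * sin θ * cos (((a : ℝ) + 1) * θ) := by
        rw [show ((a : ℝ) + 2) * θ = ((a : ℝ) + 1) * θ + θ by ring,
          show (a : ℝ) * θ = ((a : ℝ) + 1) * θ - θ by ring,
          Real.sin_add, Real.sin_sub]
        ring
      have hcos : 0 ≤ cos (((a : ℝ) + 1) * θ) :=
        Real.cos_nonneg_of_mem_Icc ⟨by linarith, hc⟩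
      have mono := Real.strictMonoOn_sin.monotoneOn
      have i1 : sin ((a : ℝ) * θ) ≤ sin (((a : ℝ) + 1) * θ) :=
        mono ⟨by linarith, by linarith⟩ ⟨by linarith, hc⟩ L2
      have i2 : sin (3 * θ) ≤ sin ((a : ℝ) * θ) :=
        mono ⟨by linarith, by linarith⟩ ⟨by linarith, by linarith⟩ L1
      have s5 : 0 ≤ sin (3 * θ) :=
        Real.sin_nonneg_of_nonneg_of_le_pi L6 (by linarith)
      have i3 : sin (((a : ℝ) + 2) * θ) ≤ sin (((a : ℝ) - 1) * θ) + sin (3 * θ) := by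
        rw [show ((a : ℝ) + 2) * θ = ((a : ℝ) - 1) * θ + 3 * θ by ring, Real.sin_add]
        have t1 : sin (((a : ℝ) - 1) * θ) * cos (3 * θ) ≤ sin (((a : ℝ) - 1) * θ) :=
          mul_le_of_le_one_right s2 (Real.cos_le_one _)
        have t2 : cos (((a : ℝ) - 1) * θ) * sin (3 * θ) ≤ sin (3 * θ) :=
          mul_le_of_le_one_left s5 (Real.cos_le_one _)
        linarith
      have hb0 : 0 ≤ sin (((a : ℝ) + 2) * θ) - sin ((a : ℝ) * θ) := by
        rw [e1]; positivity
      have hb : sin (((a : ℝ) + 2) * θ) - sin ((a : ℝ) * θ) ≤ sin (((a : ℝ) - 1) * θ) := by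
        linarith
      have h2 : sin ((a : ℝ) * θ) * (sin (((a : ℝ) + 2) * θ) - sin ((a : ℝ) * θ)) ≤
          sin (((a : ℝ) + 1) * θ) * sin (((a : ℝ) - 1) * θ) :=
        mul_le_mul i1 hb hb0 s1
      rw [e1] at h2
      nlinarith [h2]
    · -- large angle case: cos((a+1)θ) ≤ 0
      have hcos : cos (((a : ℝ) + 1) * θ) ≤ 0 :=
        Real.cos_nonpos_of_pi_div_two_le_of_le (le_of_lt hc) (by linarith)
      have h1 : 0 ≤ sin (((a : ℝ) + 1) * θ) * sin (((a : ℝ) - 1) * θ) := mul_nonneg s1 s2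
      have h2 : sin θ * sin ((a : ℝ) * θ) * cos (((a : ℝ) + 1) * θ) ≤ 0 :=
        mul_nonpos_of_nonneg_of_nonpos (mul_nonneg s4 s3) hcos
      nlinarith [h1, h2]
end

section
/- Let a ≥ 1 be an integer. For every θ ∈ (0, π/(a+1)], the bound ((a+1)²/π)·(π/(a+1) − θ) ≤ sin((a+1)θ)/sin θ holds; that is, the linear function ℓ_a(θ) = ((a+1)²/π)(π/(a+1) − θ) through (0, a+1) and (π/(a+1), 0) bounds λ_a from below on this interval. -/
open Real in
private lemma quad_le_sin_half (x : ℝ) (h0 : 0 ≤ x) (h1 : x ≤ π / 2) :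
    x * (π - x) / π ≤ sin x := by
  have hπ : (0:ℝ) < π := pi_pos
  set f : ℝ → ℝ := fun t => sin t - t + t ^ 2 / π with hf
  have hder : ∀ t : ℝ, HasDerivAt f (cos t - 1 + 2 * t / π) t := by
    intro t
    have h1 : HasDerivAt (fun t : ℝ => sin t - t) (cos t - 1) t :=
      (hasDerivAt_sin t).sub (hasDerivAt_id t)
    have h2 : HasDerivAt (fun t : ℝ => t ^ 2 / π) (2 * t / π) t := by
      simpa [div_eq_mul_inv, mul_comm] using
        ((hasDerivAt_pow 2 t).div_const π)
    exact h1.add h2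
  have hmono : MonotoneOn f (Set.Icc 0 (π / 2)) := by
    apply monotoneOn_of_deriv_nonneg (convex_Icc 0 (π / 2))
    · exact Continuous.continuousOn (by continuity)
    · intro t _
      exact (hder t).differentiableAt.differentiableWithinAt
    · intro t ht
      rw [interior_Icc] at ht
      rw [(hder t).deriv]
      have := Real.one_sub_mul_le_cos (x := t) ht.1.le ht.2.le
      have h2 : 2 / π * t = 2 * t / π := by ring
      linarith [h2 ▸ this]
  have h0f : f 0 = 0 := by simp [hf]
  have := hmono (Set.mem_Icc.2 ⟨le_refl 0, by positivity⟩) (Set.mem_Icc.2 ⟨h0, h1⟩) h0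
  rw [h0f, hf] at this
  have hx2 : x * (π - x) / π = x - x ^ 2 / π := by field_simp
  simp only at this
  linarith

open Real in
private lemma quad_le_sin (x : ℝ) (h0 : 0 ≤ x) (h1 : x ≤ π) :
    x * (π - x) / π ≤ sin x := by
  rcases le_or_gt x (π / 2) with h | h
  · exact quad_le_sin_half x h0 h
  · have := quad_le_sin_half (π - x) (by linarith) (by linarith)
    rw [Real.sin_pi_sub] at this
    calc x * (π - x) / π = (π - x) * (π - (π - x)) / π := by ring
    _ ≤ sin x := this

open Real in
/-- For an integer `a ≥ 1` and `θ ∈ (0, π/(a+1)]`, the linear function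
`ℓ_a(θ) = ((a+1)²/π)(π/(a+1) − θ)` bounds `λ_a(θ) = sin((a+1)θ)/sin θ` from below. -/
theorem linear_lower_bound_lambda (a : ℕ) (ha : 1 ≤ a) :
    ∀ θ : ℝ, 0 < θ → θ ≤ π / ((a : ℝ) + 1) →
      ((a : ℝ) + 1) ^ 2 / π * (π / ((a : ℝ) + 1) - θ) ≤
        sin (((a : ℝ) + 1) * θ) / sin θ := by
  intro θ hθ hθ'
  have hπ : (0:ℝ) < π := pi_pos
  set n : ℝ := (a : ℝ) + 1 with hn
  have hn2 : (2:ℝ) ≤ n := by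
    have : (1:ℝ) ≤ (a:ℝ) := by exact_mod_cast ha
    rw [hn]; linarith
  have hn0 : (0:ℝ) < n := by linarith
  have hnθ : n * θ ≤ π := by
    have := (le_div_iff₀ hn0).mp hθ'
    linarith [this]
  have hθπ : θ < π := by
    nlinarith [hnθ]
  have hsθ : 0 < sin θ := sin_pos_of_pos_of_lt_pi hθ hθπ
  rw [le_div_iff₀ hsθ]
  have hfac : 0 ≤ n ^ 2 / π * (π / n - θ) := by
    apply mul_nonneg (by positivity)
    have : θ ≤ π / n := hθ'
    linarith
  calc n ^ 2 / π * (π / n - θ) * sin θ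
      ≤ n ^ 2 / π * (π / n - θ) * θ :=
        mul_le_mul_of_nonneg_left (Real.sin_le hθ.le) hfac
    _ = (n * θ) * (π - n * θ) / π := by field_simp
    _ ≤ sin (n * θ) := quad_le_sin _ (by positivity) hnθ
end

section
/- For all integers a ≥ 3 and μ ≥ 3, ∫_0^{π/(a+1)} λ_a(θ)^{μ+1} · F_a(θ) dθ ≥ ( (a+1)³ / (3(a+1)² − 4) ) · ∫_0^{π/(a+1)} λ_a(θ)^μ · F_a(θ) dθ. -/
open Real

lemma chord_sin {t y : ℝ} (ht0 : 0 ≤ t) (ht1 : t ≤ 1) (hy0 : 0 ≤ y) (hy : y ≤ π) :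
    t * sin y ≤ sin (t * y) := by
  have h := (strictConcaveOn_sin_Icc.concaveOn).2 (Set.mem_Icc.2 ⟨hy0, hy⟩)
    (Set.mem_Icc.2 ⟨le_refl 0, pi_nonneg⟩) ht0 (by linarith : (0:ℝ) ≤ 1 - t) (by ring)
  simpa using h

lemma numeric_2pi5 : 16 * π / 55 ≤ sin (2 * π / 5) := by
  have h1 : sin (2 * π / 5) = cos (π / 10) := by
    rw [show 2 * π / 5 = π / 2 - π / 10 by ring, sin_pi_div_two_sub]
  have h2 : 1 - (π / 10) ^ 2 / 2 ≤ cos (π / 10) := one_sub_sq_div_two_le_cos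
  have hπ1 : π < 3.15 := pi_lt_d2
  have hπ0 : 0 < π := pi_pos
  rw [h1]
  nlinarith

lemma numeric_7pi10 : 14 * π / 55 ≤ sin (7 * π / 10) := by
  have h1 : sin (7 * π / 10) = (1 + √5) / 4 := by
    rw [show 7 * π / 10 = π - 3 * π / 10 by ring, sin_pi_sub,
      show 3 * π / 10 = π / 2 - π / 5 by ring, sin_pi_div_two_sub, cos_pi_div_five]
  have h2 : √5 ^ 2 = 5 := Real.sq_sqrt (by norm_num)
  have h3 : 0 ≤ √5 := Real.sqrt_nonneg 5
  have hπ1 : π < 3.15 := pi_lt_d2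
  rw [h1]
  nlinarith

lemma t3_bound {t c : ℝ} (h0 : 0 ≤ t) (h1 : t ≤ c) : t ^ 3 * (c - t) ≤ 27 / 256 * c ^ 4 := by
  have hc : 0 ≤ c := h0.trans h1
  nlinarith [mul_nonneg (sq_nonneg (4 * t - 3 * c))
    (by nlinarith [sq_nonneg t, sq_nonneg c, mul_nonneg h0 hc] :
      (0:ℝ) ≤ 16 * t ^ 2 + 8 * t * c + 3 * c ^ 2)]

lemma lam_lb {A θ x2 : ℝ} (hθ : 0 < θ) (hθπ : θ < π) (hA : 0 < A)
    (hx : A * θ ≤ x2) (hx2 : 0 < x2) (hx2π : x2 ≤ π) :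
    sin x2 / x2 * A ≤ sin (A * θ) / sin θ := by
  have hsθ : 0 < sin θ := sin_pos_of_pos_of_lt_pi hθ hθπ
  have hAθ0 : 0 ≤ A * θ := by positivity
  have hchord : (A * θ / x2) * sin x2 ≤ sin (A * θ) := by
    have := chord_sin (t := A * θ / x2) (y := x2) (by positivity)
      ((div_le_one hx2).2 hx) hx2.le hx2π
    rwa [div_mul_cancel₀ _ hx2.ne'] at this
  have hsAθ : 0 ≤ sin (A * θ) := sin_nonneg_of_nonneg_of_le_pi hAθ0 (hx.trans hx2π)
  have h1 : sin x2 / x2 * A = (A * θ / x2 * sin x2) / θ := by field_simp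
  rw [h1]
  calc (A * θ / x2 * sin x2) / θ ≤ sin (A * θ) / θ := by gcongr
      _ ≤ sin (A * θ) / sin θ :=
        div_le_div_of_nonneg_left hsAθ hsθ (sin_le hθ.le)

lemma F_eq (b θ : ℝ) : 1 - 2 * cos (2 * b * θ) + cos (2 * (b + 1) * θ)
    = 4 * sin (b * θ) ^ 2 - 2 * sin ((b + 1) * θ) ^ 2 := by
  have h : ∀ y : ℝ, cos (2 * y) = 1 - 2 * sin y ^ 2 := fun y => by
    rw [cos_two_mul, cos_sq']; ring
  rw [show 2 * b * θ = 2 * (b * θ) by ring, show 2 * (b + 1) * θ = 2 * ((b + 1) * θ) by ring,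
    h, h]
  ring

lemma lam_poly (n : ℕ) : ∃ P : ℝ → ℝ, Continuous P ∧
    ∀ θ : ℝ, sin θ ≠ 0 → sin (((n:ℝ) + 1) * θ) / sin θ = P θ := by
  refine ⟨fun θ => Polynomial.eval (cos θ) (Polynomial.Chebyshev.U ℝ (n : ℤ)),
    (Polynomial.continuous _).comp continuous_cos, ?_⟩
  intro θ hs
  have hU := Polynomial.Chebyshev.U_real_cos θ (n : ℤ)
  push_cast at hU
  rw [div_eq_iff hs]
  exact hU.symm

set_option maxHeartbeats 1000000 in
open Real in
/-- For all integers `a ≥ 3` and `μ ≥ 3`, with `λ_a(θ) = sin((a+1)θ)/sin θ` and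
`F_a(θ) = 1 − 2cos(2aθ) + cos(2(a+1)θ)`:
`∫₀^{π/(a+1)} λ_a^{μ+1} F_a ≥ ((a+1)³/(3(a+1)² − 4)) ∫₀^{π/(a+1)} λ_a^μ F_a`. -/
theorem inductive_step_estimate (a μ : ℕ) (ha : 3 ≤ a) (hμ : 3 ≤ μ) :
    (((a : ℝ) + 1) ^ 3 / (3 * ((a : ℝ) + 1) ^ 2 - 4)) *
      ∫ θ in (0:ℝ)..(π / ((a : ℝ) + 1)),
        (sin (((a : ℝ) + 1) * θ) / sin θ) ^ μ *
          (1 - 2 * cos (2 * (a : ℝ) * θ) + cos (2 * ((a : ℝ) + 1) * θ)) ≤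
    ∫ θ in (0:ℝ)..(π / ((a : ℝ) + 1)),
      (sin (((a : ℝ) + 1) * θ) / sin θ) ^ (μ + 1) *
        (1 - 2 * cos (2 * (a : ℝ) * θ) + cos (2 * ((a : ℝ) + 1) * θ)) := by
  have haR : (3:ℝ) ≤ (a : ℝ) := by exact_mod_cast ha
  have hπ : 0 < π := pi_pos
  set A : ℝ := (a : ℝ) + 1 with hAdef
  have hA : (4:ℝ) ≤ A := by rw [hAdef]; linarith
  have hA0 : 0 < A := by linarith
  set L : ℝ := π / A with hLdef
  have hL0 : 0 < L := by positivity
  have hLπ4 : L ≤ π / 4 := by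
    rw [hLdef]; exact div_le_div_of_nonneg_left hπ.le (by norm_num) hA |>.trans_eq rfl
  set c : ℝ := A ^ 3 / (3 * A ^ 2 - 4) with hcdef
  have hden : (0:ℝ) < 3 * A ^ 2 - 4 := by nlinarith
  have hc0 : 0 < c := by rw [hcdef]; positivity
  have hc11 : c ≤ 4 * A / 11 := by
    rw [hcdef, div_le_div_iff₀ hden (by norm_num)]
    nlinarith
  obtain ⟨P, hcontP, hPF0⟩ := lam_poly a
  set F : ℝ → ℝ := fun θ =>
      1 - 2 * cos (2 * (a:ℝ) * θ) + cos (2 * A * θ) with hFdef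
  clear_value A L c F
  have hcontF : Continuous F := by
    rw [hFdef]; fun_prop
  -- identification of λ with the Chebyshev polynomial on (0, L]
  have hPF : ∀ θ : ℝ, 0 < θ → θ ≤ L → sin (A * θ) / sin θ = P θ := by
    intro θ hθ hθL
    have hθπ : θ < π := lt_of_le_of_lt (hθL.trans hLπ4) (by linarith)
    have hs : sin θ ≠ 0 := (sin_pos_of_pos_of_lt_pi hθ hθπ).ne'
    rw [hAdef]
    exact hPF0 θ hs
  -- F bounds
  have hF_identity : ∀ θ : ℝ, F θ = 4 * sin ((a:ℝ) * θ) ^ 2 - 2 * sin (A * θ) ^ 2 := by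
    intro θ; rw [hFdef, hAdef]; exact F_eq (a:ℝ) θ
  have hF_bounds : ∀ θ : ℝ, 0 ≤ θ → θ ≤ L →
      sin (A * θ) ^ 2 / 4 ≤ F θ ∧ F θ ≤ 4 := by
    intro θ hθ0 hθL
    have hAθπ : A * θ ≤ π := by
      rw [hLdef] at hθL
      calc A * θ ≤ A * (π / A) := by gcongr
        _ = π := by field_simp
    have hAθ0 : 0 ≤ A * θ := by positivity
    have hchord : ((a:ℝ) / A) * sin (A * θ) ≤ sin (((a:ℝ) / A) * (A * θ)) :=
      chord_sin (by positivity) (by rw [div_le_one hA0, hAdef]; linarith) hAθ0 hAθπ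
    have haA : ((a:ℝ) / A) * (A * θ) = (a:ℝ) * θ := by field_simp
    rw [haA] at hchord
    have hsAθ : 0 ≤ sin (A * θ) := sin_nonneg_of_nonneg_of_le_pi hAθ0 hAθπ
    have hq : ((a:ℝ) / A) ^ 2 * sin (A * θ) ^ 2 ≤ sin ((a:ℝ) * θ) ^ 2 := by
      have h0 : 0 ≤ ((a:ℝ) / A) * sin (A * θ) := by positivity
      nlinarith
    have hcoef : (9:ℝ) / 16 ≤ ((a:ℝ) / A) ^ 2 := by
      rw [div_pow, le_div_iff₀ (by positivity), hAdef]
      nlinarith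
    constructor
    · rw [hF_identity θ]
      have hmul := mul_le_mul_of_nonneg_right hcoef (sq_nonneg (sin (A * θ)))
      linarith
    · rw [hF_identity θ]
      have h1 : sin ((a:ℝ) * θ) ^ 2 ≤ 1 := sin_sq_le_one _
      linarith [sq_nonneg (sin (A * θ))]
  have hF0 : ∀ θ : ℝ, 0 ≤ θ → θ ≤ L → 0 ≤ F θ := by
    intro θ h0 h1
    have h2 := (hF_bounds θ h0 h1).1
    have h3 : (0:ℝ) ≤ sin (A * θ) ^ 2 := sq_nonneg _
    linarith
  -- lower bounds for P
  have hPlow7 : ∀ θ : ℝ, 0 < θ → A * θ ≤ 7 * π / 10 → 4 * A / 11 ≤ P θ := by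
    intro θ hθ hx
    have hθL : θ ≤ L := by
      rw [hLdef, le_div_iff₀ hA0, mul_comm]; linarith
    have hθπ : θ < π := lt_of_le_of_lt (hθL.trans hLπ4) (by linarith)
    have h := lam_lb hθ hθπ hA0 hx (by positivity) (by linarith)
    rw [hPF θ hθ hθL] at h
    refine le_trans ?_ h
    have h2 : (4:ℝ) / 11 ≤ sin (7 * π / 10) / (7 * π / 10) := by
      rw [le_div_iff₀ (by positivity)]
      have := numeric_7pi10
      linarith
    calc 4 * A / 11 = 4 / 11 * A := by ring
      _ ≤ sin (7 * π / 10) / (7 * π / 10) * A := by gcongr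
  have hPlow2 : ∀ θ : ℝ, 0 < θ → A * θ ≤ 2 * π / 5 → 8 * A / 11 ≤ P θ := by
    intro θ hθ hx
    have hθL : θ ≤ L := by
      rw [hLdef, le_div_iff₀ hA0, mul_comm]; linarith
    have hθπ : θ < π := lt_of_le_of_lt (hθL.trans hLπ4) (by linarith)
    have h := lam_lb hθ hθπ hA0 hx (by positivity) (by linarith)
    rw [hPF θ hθ hθL] at h
    refine le_trans ?_ h
    have h2 : (8:ℝ) / 11 ≤ sin (2 * π / 5) / (2 * π / 5) := by
      rw [le_div_iff₀ (by positivity)]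
      have := numeric_2pi5
      linarith
    calc 8 * A / 11 = 8 / 11 * A := by ring
      _ ≤ sin (2 * π / 5) / (2 * π / 5) * A := by gcongr
  have hP0 : ∀ θ : ℝ, 0 < θ → θ ≤ L → 0 ≤ P θ := by
    intro θ hθ hθL
    have hθπ : θ < π := lt_of_le_of_lt (hθL.trans hLπ4) (by linarith)
    rw [← hPF θ hθ hθL]
    have hAθπ : A * θ ≤ π := by
      rw [hLdef] at hθL
      calc A * θ ≤ A * (π / A) := by gcongr
        _ = π := by field_simp
    exact div_nonneg (sin_nonneg_of_nonneg_of_le_pi (by positivity) hAθπ)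
      (sin_nonneg_of_nonneg_of_le_pi hθ.le hθπ.le)
  -- replace integrands
  have hIcong : ∀ k : ℕ,
      (∫ θ in (0:ℝ)..L, (sin (A * θ) / sin θ) ^ k *
          (1 - 2 * cos (2 * (a:ℝ) * θ) + cos (2 * A * θ)))
        = ∫ θ in (0:ℝ)..L, (P θ) ^ k * F θ := by
    intro k
    apply intervalIntegral.integral_congr_ae
    filter_upwards with θ hθ
    rw [Set.uIoc_of_le hL0.le] at hθ
    rw [hPF θ hθ.1 hθ.2, hFdef]
  rw [hIcong μ, hIcong (μ + 1)]
  rw [← sub_nonneg]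
  have hintk : ∀ k : ℕ, ∀ u v : ℝ, IntervalIntegrable (fun θ => (P θ) ^ k * F θ) MeasureTheory.volume u v := by
    intro k u v
    exact ((hcontP.pow k).mul hcontF).intervalIntegrable u v
  set H : ℝ → ℝ := fun θ => (P θ) ^ μ * (P θ - c) * F θ with hHdef
  have hcontH : Continuous H := by
    rw [hHdef]; exact (((hcontP.pow μ).mul (hcontP.sub continuous_const)).mul hcontF)
  have hintH : ∀ u v : ℝ, IntervalIntegrable H MeasureTheory.volume u v := fun u v =>
    hcontH.intervalIntegrable u v
  have hcomb : (∫ θ in (0:ℝ)..L, (P θ) ^ (μ+1) * F θ)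
      - c * ∫ θ in (0:ℝ)..L, (P θ) ^ μ * F θ = ∫ θ in (0:ℝ)..L, H θ := by
    rw [← intervalIntegral.integral_const_mul, ← intervalIntegral.integral_sub (hintk (μ+1) 0 L)
      ((hintk μ 0 L).const_mul c)]
    apply intervalIntegral.integral_congr
    intro θ _
    rw [hHdef]
    ring
  rw [hcomb]
  -- split into four pieces
  set t1 : ℝ := π / (4 * A) with ht1def
  set t2 : ℝ := 2 * π / (5 * A) with ht2def
  set t3 : ℝ := 7 * π / (10 * A) with ht3def
  clear_value H t1 t2 t3
  have h01 : (0:ℝ) ≤ t1 := by rw [ht1def]; positivity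
  have h12 : t1 ≤ t2 := by
    rw [ht1def, ht2def, div_le_div_iff₀ (by positivity) (by positivity)]
    nlinarith [mul_pos hπ hA0]
  have ht10 : 0 < t1 := by rw [ht1def]; positivity
  have ht20 : 0 < t2 := by rw [ht2def]; positivity
  have ht30 : 0 < t3 := by rw [ht3def]; positivity
  have h23 : t2 ≤ t3 := by
    rw [ht2def, ht3def, div_le_div_iff₀ (by positivity) (by positivity)]
    nlinarith [mul_pos hπ hA0]
  have h3L : t3 ≤ L := by
    rw [ht3def, hLdef, div_le_div_iff₀ (by positivity) hA0]
    nlinarith [mul_pos hπ hA0]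
  have hsum1 : (∫ θ in (0:ℝ)..t1, H θ) + (∫ θ in t1..t2, H θ) = ∫ θ in (0:ℝ)..t2, H θ :=
    intervalIntegral.integral_add_adjacent_intervals (hintH 0 t1) (hintH t1 t2)
  have hsum2 : (∫ θ in (0:ℝ)..t2, H θ) + (∫ θ in t2..t3, H θ) = ∫ θ in (0:ℝ)..t3, H θ :=
    intervalIntegral.integral_add_adjacent_intervals (hintH 0 t2) (hintH t2 t3)
  have hsum3 : (∫ θ in (0:ℝ)..t3, H θ) + (∫ θ in t3..L, H θ) = ∫ θ in (0:ℝ)..L, H θ :=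
    intervalIntegral.integral_add_adjacent_intervals (hintH 0 t3) (hintH t3 L)
  -- piece 1 : nonneg
  have hB1 : 0 ≤ ∫ θ in (0:ℝ)..t1, H θ := by
    apply intervalIntegral.integral_nonneg h01
    intro u hu
    rcases eq_or_lt_of_le hu.1 with h | h
    · subst h
      have hF0u : F 0 = 0 := by rw [hFdef]; norm_num
      simp [hHdef, hF0u]
    · have huL : u ≤ L := hu.2.trans (h12.trans (h23.trans h3L))
      have hAu : A * u ≤ 7 * π / 10 := by
        have : A * u ≤ A * t1 := by gcongr; exact hu.2
        rw [ht1def] at this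
        calc A * u ≤ A * (π / (4 * A)) := this
          _ = π / 4 := by field_simp
          _ ≤ 7 * π / 10 := by linarith
      have hPc : c ≤ P u := le_trans (by linarith) (hPlow7 u h hAu)
      have hF0u : 0 ≤ F u := hF0 u hu.1 huL
      rw [hHdef]
      have : 0 ≤ P u := le_trans (by positivity) hPc
      have h1 : 0 ≤ P u ^ μ := pow_nonneg this μ
      have h2 : 0 ≤ P u - c := by linarith
      positivity
  -- piece 3 : nonneg
  have hB3 : 0 ≤ ∫ θ in t2..t3, H θ := by
    apply intervalIntegral.integral_nonneg h23
    intro u hu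
    have hu0 : 0 < u := lt_of_lt_of_le ht20 hu.1
    have huL : u ≤ L := hu.2.trans h3L
    have hAu : A * u ≤ 7 * π / 10 := by
      have : A * u ≤ A * t3 := by gcongr; exact hu.2
      rw [ht3def] at this
      calc A * u ≤ A * (7 * π / (10 * A)) := this
        _ = 7 * π / 10 := by field_simp
    have hPc : c ≤ P u := le_trans (by linarith) (hPlow7 u hu0 hAu)
    have hF0u : 0 ≤ F u := hF0 u hu0.le huL
    rw [hHdef]
    have hP0u : 0 ≤ P u := le_trans (by positivity) hPc
    have h1 : 0 ≤ P u ^ μ := pow_nonneg hP0u μ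
    have h2 : 0 ≤ P u - c := by linarith
    positivity
  -- piece 2 : quantitative lower bound
  have hB2 : ((8 * A / 11) ^ μ * (4 * A / 11) * (1 / 8)) * (t2 - t1) ≤ ∫ θ in t1..t2, H θ := by
    have hmono := intervalIntegral.integral_mono_on (μ := MeasureTheory.volume)
      (f := fun _ : ℝ => (8 * A / 11) ^ μ * (4 * A / 11) * (1 / 8))
      (g := H) h12 (intervalIntegrable_const) (hintH t1 t2) ?_
    · rw [intervalIntegral.integral_const, smul_eq_mul] at hmono
      linarith
    · intro u hu
      have hu0 : 0 < u := lt_of_lt_of_le ht10 hu.1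
      have huL : u ≤ L := hu.2.trans (h23.trans h3L)
      have hAu2 : A * u ≤ 2 * π / 5 := by
        have : A * u ≤ A * t2 := by gcongr; exact hu.2
        rw [ht2def] at this
        calc A * u ≤ A * (2 * π / (5 * A)) := this
          _ = 2 * π / 5 := by field_simp
      have hAu1 : π / 4 ≤ A * u := by
        have : A * t1 ≤ A * u := by gcongr; exact hu.1
        rw [ht1def] at this
        calc π / 4 = A * (π / (4 * A)) := by field_simp
          _ ≤ A * u := this
      have hPu : 8 * A / 11 ≤ P u := hPlow2 u hu0 hAu2
      -- sin (A * u) ≥ √2 / 2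
      have hsin : √2 / 2 ≤ sin (A * u) := by
        rw [← sin_pi_div_four]
        apply sin_le_sin_of_le_of_le_pi_div_two _ _ hAu1
        · linarith
        · linarith
      have hsin2 : (1:ℝ) / 2 ≤ sin (A * u) ^ 2 := by
        have h2 : (√2 / 2) ^ 2 = 1 / 2 := by
          rw [div_pow, Real.sq_sqrt] <;> norm_num
        have hs0 : 0 ≤ √2 / 2 := by positivity
        nlinarith
      have hFu : 1 / 8 ≤ F u := by
        have := (hF_bounds u hu0.le huL).1
        linarith
      rw [hHdef]
      have hP0u : 0 ≤ P u := le_trans (by positivity) hPu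
      have hPc : 4 * A / 11 ≤ P u - c := by linarith
      have hpow : (8 * A / 11) ^ μ ≤ P u ^ μ := pow_le_pow_left₀ (by positivity) hPu μ
      have hm1 : (8 * A / 11) ^ μ * (4 * A / 11) ≤ P u ^ μ * (P u - c) :=
        mul_le_mul hpow hPc (by positivity) (pow_nonneg hP0u μ)
      have hm0 : 0 ≤ P u ^ μ * (P u - c) := le_trans (by positivity) hm1
      exact mul_le_mul hm1 hFu (by norm_num) hm0
  -- piece 4 : lower bound by negative constant
  have hB4 : (-(27 / 64 * c ^ (μ + 1))) * (L - t3) ≤ ∫ θ in t3..L, H θ := by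
    have hmono := intervalIntegral.integral_mono_on (μ := MeasureTheory.volume)
      (f := fun _ : ℝ => -(27 / 64 * c ^ (μ + 1)))
      (g := H) h3L (intervalIntegrable_const) (hintH t3 L) ?_
    · rw [intervalIntegral.integral_const, smul_eq_mul] at hmono
      nlinarith
    · intro u hu
      have hu0 : 0 < u := lt_of_lt_of_le ht30 hu.1
      have huL : u ≤ L := hu.2
      have hP0u : 0 ≤ P u := hP0 u hu0 huL
      have hF0u : 0 ≤ F u := hF0 u hu0.le huL
      have hF4u : F u ≤ 4 := (hF_bounds u hu0.le huL).2
      rw [hHdef]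
      rcases le_total c (P u) with hcase | hcase
      · have h1 : 0 ≤ P u ^ μ * (P u - c) * F u := by
          have h2 : 0 ≤ P u - c := by linarith
          positivity
        have h3 : 0 ≤ 27 / 64 * c ^ (μ + 1) := by positivity
        linarith
      · obtain ⟨k, rfl⟩ : ∃ k, μ = k + 3 := ⟨μ - 3, by omega⟩
        have hkey : P u ^ (k + 3) * (c - P u) ≤ 27 / 256 * c ^ (k + 3 + 1) := by
          have h1 : P u ^ (k + 3) * (c - P u) = P u ^ k * (P u ^ 3 * (c - P u)) := by ring
          rw [h1]
          calc P u ^ k * (P u ^ 3 * (c - P u))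
              ≤ c ^ k * (27 / 256 * c ^ 4) := by
                apply mul_le_mul (pow_le_pow_left₀ hP0u hcase k)
                  (t3_bound hP0u hcase) ?_ (by positivity)
                have h2 : 0 ≤ P u ^ 3 := by positivity
                nlinarith
            _ = 27 / 256 * c ^ (k + 3 + 1) := by ring
        have hprod : P u ^ (k + 3) * (c - P u) * F u ≤ 27 / 256 * c ^ (k + 3 + 1) * 4 := by
          apply mul_le_mul hkey hF4u hF0u (by positivity)
        nlinarith
  -- final arithmetic
  have ht21 : t2 - t1 = 3 / 20 * (π / A) := by
    rw [ht1def, ht2def]; field_simp; ring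
  have htL3 : L - t3 = 3 / 10 * (π / A) := by
    rw [ht3def, hLdef]; field_simp; ring
  have harith : 27 / 64 * c ^ (μ + 1) * (L - t3)
      ≤ ((8 * A / 11) ^ μ * (4 * A / 11) * (1 / 8)) * (t2 - t1) := by
    rw [ht21, htL3]
    have hw0 : 0 < π / A := by positivity
    have h1 : c ^ (μ + 1) ≤ (4 * A / 11) ^ (μ + 1) := pow_le_pow_left₀ hc0.le hc11 _
    have h2 : (8 * A / 11) ^ μ = 2 ^ μ * (4 * A / 11) ^ μ := by
      rw [← mul_pow]; ring_nf
    have h3 : (8:ℝ) ≤ 2 ^ μ := by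
      calc (8:ℝ) = 2 ^ 3 := by norm_num
        _ ≤ 2 ^ μ := pow_le_pow_right₀ (by norm_num) hμ
    have hX0 : (0:ℝ) ≤ (4 * A / 11) ^ (μ + 1) := by positivity
    have hXw : (0:ℝ) ≤ (4 * A / 11) ^ (μ + 1) * (π / A) := by positivity
    calc 27 / 64 * c ^ (μ + 1) * (3 / 10 * (π / A))
        ≤ 27 / 64 * (4 * A / 11) ^ (μ + 1) * (3 / 10 * (π / A)) := by gcongr
      _ = 81 / 640 * ((4 * A / 11) ^ (μ + 1) * (π / A)) := by ring
      _ ≤ 8 * (3 / 160) * ((4 * A / 11) ^ (μ + 1) * (π / A)) := by nlinarith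
      _ ≤ 2 ^ μ * (3 / 160) * ((4 * A / 11) ^ (μ + 1) * (π / A)) := by nlinarith
      _ = (2 ^ μ * (4 * A / 11) ^ μ * (4 * A / 11) * (1 / 8)) * (3 / 20 * (π / A)) := by
          rw [pow_succ]; ring
      _ = ((8 * A / 11) ^ μ * (4 * A / 11) * (1 / 8)) * (3 / 20 * (π / A)) := by
          rw [h2]
  linarith
end
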